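/- arXiv:math/0608140 — 7 statements merged into one kernel-verified Lean document; each statement's English description precedes it below -/
import Mathlib

section
/- For every dimension d ≥ 1, the sequence β_{3^d−2}(T^(d)[n])/n^d converges to 1 − 3^(−d) as n → ∞; that is, the limiting density τ_{3^d−2}^(d) for d-dimensional toroidal kings graphs equals 1 − 3^(−d). -/
open Filter Topology

/-- The `d`-dimensional kings graph on `Fin (n 0) × ⋯ × Fin (n (d-1))`:
distinct vertices are adjacent iff their coordinates differ by at most 1. -/
def kingsGraph (d : ℕ) (n : Fin d → ℕ) :
    SimpleGraph (∀ i : Fin d, Fin (n i)) where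
  Adj u v := u ≠ v ∧ ∀ i, |((v i : ℤ)) - (u i : ℤ)| ≤ 1
  symm := by
    constructor
    rintro u v ⟨h1, h2⟩
    exact ⟨h1.symm, fun i => by rw [abs_sub_comm]; exact h2 i⟩
  loopless := by constructor; intro v h; exact h.1 rfl

/-- The `d`-dimensional toroidal kings graph on `ZMod (n 0) × ⋯ × ZMod (n (d-1))`:
distinct vertices are adjacent iff each coordinate difference is `-1`, `0` or `1`. -/
def torusGraph (d : ℕ) (n : Fin d → ℕ) :
    SimpleGraph (∀ i : Fin d, ZMod (n i)) where
  Adj u v := u ≠ v ∧ ∀ i, v i - u i = -1 ∨ v i - u i = 0 ∨ v i - u i = 1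
  symm := by
    constructor
    rintro u v ⟨h1, h2⟩
    refine ⟨h1.symm, fun i => ?_⟩
    rcases h2 i with h | h | h
    · right; right; rw [show u i - v i = -(v i - u i) by ring, h]; norm_num
    · right; left; rw [show u i - v i = -(v i - u i) by ring, h]; norm_num
    · left; rw [show u i - v i = -(v i - u i) by ring, h]
  loopless := by constructor; intro v h; exact h.1 rfl

/-- A set `S` of vertices is `k`-dependent if every vertex of `S`
has at most `k` neighbors in `S`. -/
def IsKDependent {V : Type*} (G : SimpleGraph V) (k : ℕ) (S : Set V) : Prop :=
  ∀ v ∈ S, (S ∩ G.neighborSet v).ncard ≤ k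

/-- `betaK G k` is the maximum cardinality of a `k`-dependent set in `G`. -/
noncomputable def betaK {V : Type*} (G : SimpleGraph V) (k : ℕ) : ℕ :=
  sSup {m | ∃ S : Set V, IsKDependent G k S ∧ S.ncard = m}

/-- A set `S` of vertices is half-dependent if every vertex `v ∈ S`
has at most `|N(v)|/2` neighbors in `S`. -/
def IsHalfDependent {V : Type*} (G : SimpleGraph V) (S : Set V) : Prop :=
  ∀ v ∈ S, 2 * (S ∩ G.neighborSet v).ncard ≤ (G.neighborSet v).ncard

/-- `halfNum G` is the maximum cardinality of a half-dependent set in `G`. -/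
noncomputable def halfNum {V : Type*} (G : SimpleGraph V) : ℕ :=
  sSup {m | ∃ S : Set V, IsHalfDependent G S ∧ S.ncard = m}

/-- A graph is vertex-transitive if any vertex can be mapped to any other
by a graph automorphism. -/
def IsVertexTransitive {V : Type*} (G : SimpleGraph V) : Prop :=
  ∀ u v : V, ∃ f : G ≃g G, f u = v

section Aux

open Set

/-- ncard of a universal pi set. -/
lemma ncard_univ_pi {ι : Type*} [Fintype ι] {α : ι → Type*} (s : ∀ i, Set (α i)) :
    (Set.univ.pi s).ncard = ∏ i, (s i).ncard := by
  rw [← Nat.card_coe_set_eq, Nat.card_congr (Equiv.Set.univPi s), Nat.card_pi]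
  simp [Nat.card_coe_set_eq]

variable {d n : ℕ}

lemma tri_ncard (hn : 3 ≤ n) : ({-1, 0, 1} : Set (ZMod n)).ncard = 3 := by
  haveI : NeZero n := ⟨by omega⟩
  have h1 : ((1 : ℕ) : ZMod n) ≠ 0 := by
    intro h; rw [ZMod.natCast_eq_zero_iff] at h
    exact absurd (Nat.le_of_dvd (by norm_num) h) (by omega)
  have h2 : ((2 : ℕ) : ZMod n) ≠ 0 := by
    intro h; rw [ZMod.natCast_eq_zero_iff] at h
    exact absurd (Nat.le_of_dvd (by norm_num) h) (by omega)
  push_cast at h1 h2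
  rw [Set.ncard_eq_three]
  refine ⟨-1, 0, 1, ?_, ?_, ?_, rfl⟩
  · intro h; exact h1 (by linear_combination -h)
  · intro h; exact h2 (by linear_combination -h)
  · intro h; exact h1 (by linear_combination -h)

/-- the closed `box` around a vertex -/
def torusBox (d n : ℕ) (v : ∀ _ : Fin d, ZMod n) : Set (∀ _ : Fin d, ZMod n) :=
  {u | ∀ i, u i - v i ∈ ({-1, 0, 1} : Set (ZMod n))}

lemma box_ncard (hn : 3 ≤ n) (v : ∀ _ : Fin d, ZMod n) :
    (torusBox d n v).ncard = 3 ^ d := by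
  haveI : NeZero n := ⟨by omega⟩
  have hbox : torusBox d n v
      = (fun u : ∀ _ : Fin d, ZMod n => fun i => u i - v i) ⁻¹'
        (Set.univ.pi fun _ : Fin d => ({-1, 0, 1} : Set (ZMod n))) := by
    ext u
    simp [torusBox, Set.mem_pi]
  have hinj : Function.Injective
      (fun u : ∀ _ : Fin d, ZMod n => fun i => u i - v i) := by
    intro a b hab
    funext i
    have := congrFun hab i
    simpa [sub_left_inj] using this
  have hsurj : Function.Surjective
      (fun u : ∀ _ : Fin d, ZMod n => fun i => u i - v i) := by
    intro w
    exact ⟨fun i => w i + v i, by funext i; simp⟩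
  rw [hbox, Set.ncard_preimage_of_injective_subset_range hinj
    (by rw [hsurj.range_eq]; exact Set.subset_univ _)]
  rw [ncard_univ_pi]
  simp [tri_ncard hn]

lemma mem_box_self (v : ∀ _ : Fin d, ZMod n) : v ∈ torusBox d n v := by
  intro i; simp [torusBox]

lemma nbhd_eq (v : ∀ _ : Fin d, ZMod n) :
    (torusGraph d (fun _ => n)).neighborSet v = torusBox d n v \ {v} := by
  ext u
  constructor
  · rintro ⟨h1, h2⟩
    refine ⟨fun i => ?_, fun h => h1 (by simp at h; rw [h])⟩
    rcases h2 i with h | h | h <;> simp [torusBox, h]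
  · rintro ⟨h2, h1⟩
    refine ⟨fun h => h1 (by rw [h]; rfl), fun i => ?_⟩
    rcases h2 i with h | h | h <;> simp_all

lemma deg_eq (hn : 3 ≤ n) (v : ∀ _ : Fin d, ZMod n) :
    ((torusGraph d (fun _ => n)).neighborSet v).ncard = 3 ^ d - 1 := by
  haveI : NeZero n := ⟨by omega⟩
  rw [nbhd_eq, Set.ncard_diff_singleton_of_mem (mem_box_self v), box_ncard hn]

lemma card_vtx (hn : 3 ≤ n) : Nat.card (∀ _ : Fin d, ZMod n) = n ^ d := by
  haveI : NeZero n := ⟨by omega⟩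
  rw [Nat.card_pi]
  simp [Nat.card_zmod]

lemma exists_out (hd : 1 ≤ d) (hn : 3 ≤ n) {S : Set (∀ _ : Fin d, ZMod n)}
    (hS : IsKDependent (torusGraph d (fun _ => n)) (3 ^ d - 2) S)
    {v : ∀ _ : Fin d, ZMod n} (hv : v ∈ S) :
    ∃ t, t ∉ S ∧ (torusGraph d (fun _ => n)).Adj v t := by
  haveI : NeZero n := ⟨by omega⟩
  by_contra h
  push_neg at h
  have hsub : (torusGraph d (fun _ => n)).neighborSet v ⊆ S := by
    intro u hu
    by_contra hns
    exact h u hns hu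
  have heq : S ∩ (torusGraph d (fun _ => n)).neighborSet v
      = (torusGraph d (fun _ => n)).neighborSet v := Set.inter_eq_right.mpr hsub
  have hk := hS v hv
  rw [heq, deg_eq hn] at hk
  have h3 : 3 ≤ 3 ^ d := by
    calc 3 = 3 ^ 1 := (pow_one 3).symm
    _ ≤ 3 ^ d := Nat.pow_le_pow_right (by norm_num) hd
  omega

lemma torus_upper (hd : 1 ≤ d) (hn : 3 ≤ n) {S : Set (∀ _ : Fin d, ZMod n)}
    (hS : IsKDependent (torusGraph d (fun _ => n)) (3 ^ d - 2) S) :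
    3 ^ d * S.ncard ≤ (3 ^ d - 1) * n ^ d := by
  haveI : NeZero n := ⟨by omega⟩
  classical
  set G := torusGraph d (fun _ => n) with hG
  set T : Finset (∀ _ : Fin d, ZMod n) := Sᶜ.toFinset with hT
  have hcount : S.ncard ≤ ∑ t ∈ T, (S ∩ G.neighborSet t).ncard := by
    have hsub : S.toFinset ⊆ T.biUnion fun t => (S ∩ G.neighborSet t).toFinset := by
      intro v hv
      rw [Set.mem_toFinset] at hv
      obtain ⟨t, ht, hadj⟩ := exists_out hd hn hS hv
      refine Finset.mem_biUnion.mpr ⟨t, by simp [hT, ht], ?_⟩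
      rw [Set.mem_toFinset]
      exact ⟨hv, hadj.symm⟩
    calc S.ncard = S.toFinset.card := Set.ncard_eq_toFinset_card' S
      _ ≤ (T.biUnion fun t => (S ∩ G.neighborSet t).toFinset).card :=
          Finset.card_le_card hsub
      _ ≤ ∑ t ∈ T, (S ∩ G.neighborSet t).toFinset.card := Finset.card_biUnion_le
      _ = ∑ t ∈ T, (S ∩ G.neighborSet t).ncard := by
          simp [Set.ncard_eq_toFinset_card']
  have hdeg : ∀ t, (S ∩ G.neighborSet t).ncard ≤ 3 ^ d - 1 := by
    intro t
    calc (S ∩ G.neighborSet t).ncard ≤ (G.neighborSet t).ncard :=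
        Set.ncard_le_ncard Set.inter_subset_right
      _ = 3 ^ d - 1 := deg_eq hn t
  have h1 : S.ncard ≤ T.card * (3 ^ d - 1) := by
    calc S.ncard ≤ ∑ t ∈ T, (S ∩ G.neighborSet t).ncard := hcount
      _ ≤ ∑ _t ∈ T, (3 ^ d - 1) := Finset.sum_le_sum fun t _ => hdeg t
      _ = T.card * (3 ^ d - 1) := by rw [Finset.sum_const, smul_eq_mul]
  have hTcard : S.ncard + T.card = n ^ d := by
    rw [hT, ← Set.ncard_eq_toFinset_card', ← card_vtx (d := d) hn]
    exact Set.ncard_add_ncard_compl S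
  have hp : 1 ≤ 3 ^ d := Nat.one_le_pow _ _ (by norm_num)
  obtain ⟨b, hb⟩ : ∃ b, 3 ^ d = b + 1 := ⟨3 ^ d - 1, by omega⟩
  have e1 : 3 ^ d - 1 = b := by omega
  rw [e1] at h1
  calc 3 ^ d * S.ncard = S.ncard + b * S.ncard := by rw [hb]; ring
    _ ≤ T.card * b + b * S.ncard := Nat.add_le_add_right h1 _
    _ = b * (S.ncard + T.card) := by ring
    _ = b * n ^ d := by rw [hTcard]
    _ = (3 ^ d - 1) * n ^ d := by rw [e1]

lemma torus_lower (hn : 3 ≤ n) : ∃ S : Set (∀ _ : Fin d, ZMod n),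
    IsKDependent (torusGraph d (fun _ => n)) (3 ^ d - 2) S ∧
      n ^ d ≤ S.ncard + ((n + 2) / 3) ^ d := by
  haveI : NeZero n := ⟨by omega⟩
  classical
  set m := (n + 2) / 3 with hm
  have hm3 : n ≤ 3 * m := by omega
  set Df : Finset (ZMod n) := (Finset.range m).image fun j => ((3 * j + 1 : ℕ) : ZMod n)
    with hDf
  set D : Set (ZMod n) := ↑Df with hD
  have hDcard : D.ncard ≤ m := by
    rw [hD, Set.ncard_coe_finset]
    exact le_trans Finset.card_image_le (by rw [Finset.card_range])
  have hdom : ∀ a : ZMod n, ∃ b ∈ D, a - b = -1 ∨ a - b = 0 ∨ a - b = 1 := by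
    intro a
    have hvn : a.val < n := ZMod.val_lt a
    set j := a.val / 3 with hj
    have hjm : j < m := by omega
    refine ⟨((3 * j + 1 : ℕ) : ZMod n), ?_, ?_⟩
    · rw [hD]
      exact_mod_cast Finset.mem_image.mpr ⟨j, Finset.mem_range.mpr hjm, rfl⟩
    · have hval : a = ((a.val : ℕ) : ZMod n) := (ZMod.natCast_rightInverse a).symm
      have hcase : a.val = 3 * j ∨ a.val = 3 * j + 1 ∨ a.val = 3 * j + 2 := by omega
      rcases hcase with h | h | h
      · left; rw [hval, h]; push_cast; ring
      · right; left; rw [hval, h]; push_cast; ring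
      · right; right; rw [hval, h]; push_cast; ring
  set P : Set (∀ _ : Fin d, ZMod n) := Set.univ.pi fun _ => D with hP
  refine ⟨Pᶜ, ?_, ?_⟩
  · intro v hv
    choose b hbD hb using fun i => hdom (v i)
    have hbP : b ∈ P := by
      rw [hP]
      exact fun i _ => hbD i
    have hvb : v ≠ b := fun h => hv (h ▸ hbP)
    have hadj : (torusGraph d (fun _ => n)).Adj v b := by
      refine ⟨hvb, fun i => ?_⟩
      rcases hb i with h | h | h
      · right; right; rw [show b i - v i = -(v i - b i) by ring, h]; norm_num
      · right; left; rw [show b i - v i = -(v i - b i) by ring, h]; norm_num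
      · left; rw [show b i - v i = -(v i - b i) by ring, h]
    have hsub : Pᶜ ∩ (torusGraph d (fun _ => n)).neighborSet v
        ⊆ torusBox d n v \ {v, b} := by
      rintro u ⟨huP, huN⟩
      rw [nbhd_eq] at huN
      refine ⟨huN.1, ?_⟩
      rintro (rfl | rfl)
      · exact huN.2 rfl
      · exact huP hbP
    have hvbbox : ({v, b} : Set _) ⊆ torusBox d n v := by
      intro u hu
      simp only [Set.mem_insert_iff, Set.mem_singleton_iff] at hu
      rcases hu with h | h
      · rw [h]; exact mem_box_self v
      · rw [h]; intro i
        rcases hadj.2 i with h' | h' | h' <;> simp [torusBox, h']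
    calc (Pᶜ ∩ (torusGraph d (fun _ => n)).neighborSet v).ncard
        ≤ (torusBox d n v \ {v, b}).ncard := Set.ncard_le_ncard hsub
      _ = (torusBox d n v).ncard - ({v, b} : Set _).ncard :=
          Set.ncard_diff hvbbox
      _ = 3 ^ d - 2 := by rw [box_ncard hn, Set.ncard_pair hvb]
  · have hPcard : P.ncard ≤ m ^ d := by
      rw [hP, ncard_univ_pi]
      calc ∏ _i : Fin d, D.ncard = D.ncard ^ d := by
            rw [Finset.prod_const, Finset.card_univ, Fintype.card_fin]
        _ ≤ m ^ d := Nat.pow_le_pow_left hDcard d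
    have hcompl : Pᶜ.ncard + P.ncard = n ^ d := by
      rw [← card_vtx (d := d) hn, add_comm]
      exact Set.ncard_add_ncard_compl P
    omega

end Aux

/-- τ_{3^d−2}^(d) = 1 − 3^(−d). -/
theorem stmt_11 (d : ℕ) (hd : 1 ≤ d) :
    Filter.Tendsto
      (fun n : ℕ => (betaK (torusGraph d (fun _ => n)) (3 ^ d - 2) : ℝ) / (n : ℝ) ^ d)
      Filter.atTop (nhds (1 - ((3 : ℝ) ^ d)⁻¹)) := by
  have h3pos : (0:ℝ) < (3:ℝ) ^ d := by positivity
  have hlo : Filter.Tendsto (fun n : ℕ => 1 - (((n:ℝ) + 2) / (3 * (n:ℝ))) ^ d) atTop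
      (nhds (1 - ((3:ℝ) ^ d)⁻¹)) := by
    have h13 : Filter.Tendsto (fun n : ℕ => ((n:ℝ) + 2) / (3 * (n:ℝ))) atTop
        (nhds (3⁻¹ : ℝ)) := by
      have heq : ∀ᶠ n : ℕ in atTop,
          (3⁻¹ : ℝ) + (2/3) * (1/(n:ℝ)) = ((n:ℝ) + 2) / (3 * (n:ℝ)) := by
        filter_upwards [eventually_ge_atTop 1] with n hn
        have hn0 : (n:ℝ) ≠ 0 := by
          have : (0:ℝ) < (n:ℝ) := by exact_mod_cast hn
          linarith
        field_simp
      have hbase : Filter.Tendsto (fun n : ℕ => (3⁻¹ : ℝ) + (2/3) * (1/(n:ℝ))) atTop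
          (nhds ((3⁻¹ : ℝ) + (2/3) * 0)) :=
        tendsto_const_nhds.add (tendsto_const_nhds.mul tendsto_one_div_atTop_nhds_zero_nat)
      rw [mul_zero, add_zero] at hbase
      exact hbase.congr' heq
    have h := (tendsto_const_nhds (x := (1:ℝ)) (f := atTop)).sub (h13.pow d)
    simpa [inv_pow] using h
  refine tendsto_of_tendsto_of_tendsto_of_le_of_le' hlo tendsto_const_nhds ?_ ?_
  · -- lower bound, eventually
    filter_upwards [eventually_ge_atTop 3] with n hn
    haveI : NeZero n := ⟨by omega⟩
    have hnpos : (0:ℝ) < (n:ℝ) := by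
      have : (0:ℕ) < n := by omega
      exact_mod_cast this
    have hNpos : (0:ℝ) < (n:ℝ) ^ d := by positivity
    obtain ⟨S, hSdep, hSge⟩ := torus_lower (d := d) hn
    have hbdd : BddAbove {m | ∃ S' : Set (∀ _ : Fin d, ZMod n),
        IsKDependent (torusGraph d (fun _ => n)) (3 ^ d - 2) S' ∧ S'.ncard = m} := by
      refine ⟨n ^ d, fun m hm => ?_⟩
      obtain ⟨S', _, rfl⟩ := hm
      calc S'.ncard ≤ (Set.univ : Set (∀ _ : Fin d, ZMod n)).ncard :=
            Set.ncard_le_ncard (Set.subset_univ _)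
        _ = n ^ d := by rw [Set.ncard_univ, card_vtx hn]
    have hbeta : S.ncard ≤ betaK (torusGraph d (fun _ => n)) (3 ^ d - 2) :=
      le_csSup hbdd ⟨S, hSdep, rfl⟩
    have hnat : n ^ d ≤ betaK (torusGraph d (fun _ => n)) (3 ^ d - 2) + ((n + 2) / 3) ^ d :=
      le_trans hSge (Nat.add_le_add_right hbeta _)
    have hcast : ((n:ℝ)) ^ d ≤ (betaK (torusGraph d (fun _ => n)) (3 ^ d - 2) : ℝ)
        + (((n + 2) / 3 : ℕ) : ℝ) ^ d := by exact_mod_cast hnat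
    have hmle : (((n + 2) / 3 : ℕ) : ℝ) ≤ ((n:ℝ) + 2) / 3 := by
      calc (((n + 2) / 3 : ℕ) : ℝ) ≤ ((n + 2 : ℕ) : ℝ) / ((3 : ℕ) : ℝ) := Nat.cast_div_le
        _ = ((n:ℝ) + 2) / 3 := by push_cast; ring
    have hq : (((n + 2) / 3 : ℕ) : ℝ) ^ d ≤ (((n:ℝ) + 2) / 3) ^ d :=
      pow_le_pow_left₀ (by positivity) hmle d
    rw [le_div_iff₀ hNpos]
    have hkey : (1 - (((n:ℝ) + 2) / (3 * (n:ℝ))) ^ d) * (n:ℝ) ^ d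
        = (n:ℝ) ^ d - (((n:ℝ) + 2) / 3) ^ d := by
      have h1 : (((n:ℝ) + 2) / (3 * (n:ℝ))) ^ d * (n:ℝ) ^ d = (((n:ℝ) + 2) / 3) ^ d := by
        rw [← mul_pow]
        congr 1
        field_simp
      rw [sub_mul, one_mul, h1]
    rw [hkey]
    linarith [hcast, hq]
  · -- upper bound, eventually
    filter_upwards [eventually_ge_atTop 3] with n hn
    haveI : NeZero n := ⟨by omega⟩
    have hnpos : (0:ℝ) < (n:ℝ) := by
      have : (0:ℕ) < n := by omega
      exact_mod_cast this
    have hNpos : (0:ℝ) < (n:ℝ) ^ d := by positivity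
    have hne : Set.Nonempty {m | ∃ S' : Set (∀ _ : Fin d, ZMod n),
        IsKDependent (torusGraph d (fun _ => n)) (3 ^ d - 2) S' ∧ S'.ncard = m} :=
      ⟨0, ∅, fun v hv => absurd hv (Set.notMem_empty v), Set.ncard_empty _⟩
    have hbdd : BddAbove {m | ∃ S' : Set (∀ _ : Fin d, ZMod n),
        IsKDependent (torusGraph d (fun _ => n)) (3 ^ d - 2) S' ∧ S'.ncard = m} := by
      refine ⟨n ^ d, fun m hm => ?_⟩
      obtain ⟨S', _, rfl⟩ := hm
      calc S'.ncard ≤ (Set.univ : Set (∀ _ : Fin d, ZMod n)).ncard :=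
            Set.ncard_le_ncard (Set.subset_univ _)
        _ = n ^ d := by rw [Set.ncard_univ, card_vtx hn]
    obtain ⟨S, hSdep, hScard⟩ := Nat.sSup_mem hne hbdd
    have hup := torus_upper hd hn hSdep
    rw [hScard] at hup
    have hp : (1:ℕ) ≤ 3 ^ d := Nat.one_le_pow _ _ (by norm_num)
    have hcast : (3:ℝ) ^ d * (betaK (torusGraph d (fun _ => n)) (3 ^ d - 2) : ℝ)
        ≤ ((3:ℝ) ^ d - 1) * (n:ℝ) ^ d := by
      have h := (Nat.cast_le (α := ℝ)).mpr hup
      push_cast [Nat.cast_sub hp] at h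
      exact h
    rw [div_le_iff₀ hNpos]
    have he : (1 - ((3:ℝ) ^ d)⁻¹) * (n:ℝ) ^ d
        = (((3:ℝ) ^ d - 1) * (n:ℝ) ^ d) / (3:ℝ) ^ d := by
      field_simp
    rw [he, le_div_iff₀ h3pos]
    nlinarith [hcast]
end

section
/- Let d ≥ 1 and n ≥ 3 be integers, let c ∈ (ZMod n)^d, and let R be a nonempty subset of ZMod n. Define S(n,d,c,R) = { v ∈ (ZMod n)^d : c·v ∈ R }, and for r ∈ ZMod n let f(c,r) be the number of nonzero vectors y ∈ {−1,0,1}^d with c·y + r ∈ R. Then S(n,d,c,R) is a k-dependent set in the toroidal kings graph T^(d)[n] for k = max over r ∈ R of f(c,r). -/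
open Filter Topology

/-- linear-congruence construction of k-dependent sets in T^(d)[n]. -/
theorem stmt_12 (d : ℕ) (hd : 1 ≤ d) (n : ℕ) (hn : 3 ≤ n)
    (c : Fin d → ZMod n) (R : Set (ZMod n)) (hR : R.Nonempty)
    (S : Set (∀ _ : Fin d, ZMod n))
    (hSdef : S = {v | (∑ i, c i * v i) ∈ R})
    (f : (Fin d → ZMod n) → ZMod n → ℕ)
    (hf : ∀ r, f c r =
      {y : Fin d → ℤ | y ≠ 0 ∧ (∀ i, y i = -1 ∨ y i = 0 ∨ y i = 1) ∧
        (∑ i, c i * ((y i : ℤ) : ZMod n)) + r ∈ R}.ncard)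
    (k : ℕ) (hk : k = sSup ((fun r => f c r) '' R)) :
    IsKDependent (torusGraph d (fun _ => n)) k S := by
  haveI : NeZero n := ⟨by omega⟩
  haveI : Fact (1 < n) := ⟨by omega⟩
  have h1 : (1 : ZMod n) ≠ 0 := one_ne_zero
  have h3 : (-1 : ZMod n) ≠ 1 := by
    intro h
    have h2 : ((2:ℕ) : ZMod n) = 0 := by push_cast; linear_combination -h
    rw [ZMod.natCast_eq_zero_iff] at h2
    have := Nat.le_of_dvd (by norm_num) h2
    omega
  -- the finite ambient set of candidate vectors
  set P : Set (Fin d → ℤ) := Set.pi Set.univ (fun _ => ({-1, 0, 1} : Set ℤ)) with hP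
  have hPfin : P.Finite := Set.Finite.pi (fun _ => Set.toFinite _)
  intro v hv
  have hrR : (∑ i, c i * v i) ∈ R := by rw [hSdef] at hv; exact hv
  set r : ZMod n := ∑ i, c i * v i with hr
  set T : Set (Fin d → ℤ) :=
    {y : Fin d → ℤ | y ≠ 0 ∧ (∀ i, y i = -1 ∨ y i = 0 ∨ y i = 1) ∧
        (∑ i, c i * ((y i : ℤ) : ZMod n)) + r ∈ R} with hT
  have hTP : T ⊆ P := by
    rintro y ⟨-, hy, -⟩ i -
    rcases hy i with h | h | h <;> simp [h]
  have hTfin : T.Finite := hPfin.subset hTP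
  -- the map from neighbors to integer difference vectors
  set g : (Fin d → ZMod n) → (Fin d → ℤ) :=
    fun u i => if u i - v i = -1 then -1 else if u i - v i = 0 then 0 else 1 with hg
  set A := S ∩ (torusGraph d (fun _ => n)).neighborSet v with hA
  have hcast : ∀ u ∈ A, ∀ i, ((g u i : ℤ) : ZMod n) = u i - v i := by
    rintro u ⟨-, -, hadj⟩ i
    rcases hadj i with h | h | h
    · simp [hg, h]
    · have hne : u i - v i ≠ -1 := by rw [h]; intro hh; exact h1 (by linear_combination hh)
      have hgi : g u i = 0 := by simp only [hg]; rw [if_neg hne, if_pos h]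
      rw [hgi, Int.cast_zero, h]
    · have hne1 : u i - v i ≠ -1 := by rw [h]; exact fun hh => h3 hh.symm
      have hne0 : u i - v i ≠ 0 := by rw [h]; exact h1
      have hgi : g u i = 1 := by simp only [hg]; rw [if_neg hne1, if_neg hne0]
      rw [hgi, Int.cast_one, h]
  have hinj : Set.InjOn g A := by
    intro u hu u' hu' heq
    funext i
    have e1 := hcast u hu i
    have e2 := hcast u' hu' i
    rw [heq] at e1
    have : u i - v i = u' i - v i := by rw [← e1, ← e2]
    linear_combination this
  have himg : g '' A ⊆ T := by
    rintro _ ⟨u, hu, rfl⟩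
    obtain ⟨huS, hadj⟩ := hu
    refine ⟨?_, ?_, ?_⟩
    · intro h0
      obtain ⟨i, hi⟩ : ∃ i, u i ≠ v i := by
        by_contra hc
        push_neg at hc
        exact hadj.1 (funext fun i => (hc i).symm)
      have := hcast u ⟨huS, hadj⟩ i
      rw [congrFun h0 i] at this
      simp only [Pi.zero_apply, Int.cast_zero] at this
      exact hi (by linear_combination -this)
    · intro i
      simp only [hg]
      split_ifs <;> simp
    · have : (∑ i, c i * ((g u i : ℤ) : ZMod n)) = ∑ i, c i * (u i - v i) := by
        exact Finset.sum_congr rfl fun i _ => by rw [hcast u ⟨huS, hadj⟩ i]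
      rw [this]
      have : (∑ i, c i * (u i - v i)) + r = ∑ i, c i * u i := by
        rw [hr]; rw [← Finset.sum_add_distrib]
        exact Finset.sum_congr rfl fun i _ => by ring
      rw [this]
      rw [hSdef] at huS; exact huS
  have key : A.ncard ≤ f c r := by
    rw [hf r]
    calc A.ncard = (g '' A).ncard := (Set.ncard_image_of_injOn hinj).symm
    _ ≤ T.ncard := Set.ncard_le_ncard himg hTfin
  refine key.trans ?_
  rw [hk]
  apply le_csSup
  · refine ⟨P.ncard, ?_⟩
    rintro m ⟨r', hr', rfl⟩
    show f c r' ≤ P.ncard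
    rw [hf r']
    exact Set.ncard_le_ncard (by
      rintro y ⟨-, hy, -⟩ i -
      rcases hy i with h | h | h <;> simp [h]) hPfin
  · exact ⟨r, hrR, rfl⟩
end

section
/- For every dimension d ≥ 1, with k = 3^d − 3, the sequence β_k(T^(d)[n])/n^d converges to (3^d − 1)/(3^d + 1) as n → ∞; that is, the limiting density τ_{3^d−3}^(d) for d-dimensional toroidal kings graphs equals (3^d − 1)/(3^d + 1). In particular, τ_6^(2) = 4/5 and τ_24^(3) = 13/14. -/
open Filter Topology

section Aux
open Finset

variable {d n : ℕ}

def stepv (v : ∀ _ : Fin d, ZMod n) (ε : Fin d → ℤ) : ∀ _ : Fin d, ZMod n :=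
  fun i => v i + (ε i : ZMod n)

def boxF (v : ∀ _ : Fin d, ZMod n) : Finset (∀ _ : Fin d, ZMod n) :=
  (Fintype.piFinset fun _ : Fin d => ({-1, 0, 1} : Finset ℤ)).image (stepv v)

lemma card_boxF_le (v : ∀ _ : Fin d, ZMod n) : (boxF v).card ≤ 3 ^ d := by
  refine (Finset.card_image_le).trans ?_
  rw [Fintype.card_piFinset]
  simp

lemma small_int_cast_inj (hn : 3 ≤ n) {a b : ℤ} (ha : |a| ≤ 1) (hb : |b| ≤ 1)
    (h : (a : ZMod n) = (b : ZMod n)) : a = b := by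
  rw [ZMod.intCast_eq_intCast_iff] at h
  have hd := (Int.ModEq.dvd h)
  rw [abs_le] at ha hb
  have h2 : |b - a| < (n : ℤ) := by
    rw [abs_lt]
    have : (3:ℤ) ≤ n := by exact_mod_cast hn
    omega
  have := Int.eq_zero_of_abs_lt_dvd hd h2
  omega

lemma mem_boxF {v u : ∀ _ : Fin d, ZMod n} :
    u ∈ boxF v ↔ ∀ i, u i - v i = -1 ∨ u i - v i = 0 ∨ u i - v i = 1 := by
  simp only [boxF, mem_image, Fintype.mem_piFinset, mem_insert, mem_singleton]
  constructor
  · rintro ⟨ε, hε, rfl⟩ i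
    have := hε i
    simp only [stepv, add_sub_cancel_left]
    rcases this with h | h | h <;> rw [h] <;> simp
  · intro h
    refine ⟨fun i => if u i - v i = -1 then -1 else if u i - v i = 1 then 1 else 0, ?_, ?_⟩
    · intro i; dsimp only; split_ifs <;> simp
    · funext i
      simp only [stepv]
      by_cases h1 : u i - v i = -1
      · rw [if_pos h1]; push_cast; linear_combination -h1
      · rw [if_neg h1]
        by_cases h2 : u i - v i = 1
        · rw [if_pos h2]; push_cast; linear_combination -h2
        · rw [if_neg h2]
          rcases h i with h' | h' | h'
          · exact absurd h' h1
          · push_cast; linear_combination -h'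
          · exact absurd h' h2

lemma self_mem_boxF (v : ∀ _ : Fin d, ZMod n) : v ∈ boxF v := by
  rw [mem_boxF]; intro i; simp

lemma boxF_comm {v u : ∀ _ : Fin d, ZMod n} (h : u ∈ boxF v) : v ∈ boxF u := by
  rw [mem_boxF] at h ⊢
  intro i
  rcases h i with h' | h' | h'
  · right; right; linear_combination -h'
  · right; left; linear_combination -h'
  · left; linear_combination -h'

lemma adj_iff {v u : ∀ _ : Fin d, ZMod n} :
    (torusGraph d fun _ => n).Adj v u ↔ u ≠ v ∧ u ∈ boxF v := by
  rw [mem_boxF]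
  exact ⟨fun ⟨h1, h2⟩ => ⟨h1.symm, h2⟩, fun ⟨h1, h2⟩ => ⟨h1.symm, h2⟩⟩

instance : DecidableRel ((torusGraph d fun _ => n).Adj) :=
  fun _ _ => decidable_of_iff _ adj_iff.symm

lemma card_boxF (hn : 3 ≤ n) (v : ∀ _ : Fin d, ZMod n) : (boxF v).card = 3 ^ d := by
  rw [boxF, Finset.card_image_of_injOn, Fintype.card_piFinset]
  · simp
  · intro ε hε ε' hε' heq
    simp only [Finset.mem_coe, Fintype.mem_piFinset, mem_insert, mem_singleton] at hε hε'
    funext i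
    have h1 : |ε i| ≤ 1 := by rcases hε i with h | h | h <;> rw [h] <;> norm_num
    have h2 : |ε' i| ≤ 1 := by rcases hε' i with h | h | h <;> rw [h] <;> norm_num
    refine small_int_cast_inj hn h1 h2 ?_
    have := congrFun heq i
    simpa [stepv] using this

lemma upper_count (hn : 3 ≤ n) (hd : 1 ≤ d) (S : Finset (∀ _ : Fin d, ZMod n))
    (hS : ∀ v ∈ S, (S.filter ((torusGraph d fun _ => n).Adj v)).card ≤ 3 ^ d - 3) :
    (3 ^ d + 1) * S.card ≤ (3 ^ d - 1) * n ^ d := by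
  haveI : NeZero n := ⟨by omega⟩
  classical
  set T := Sᶜ with hT
  have hN3 : 3 ≤ 3 ^ d := by
    calc 3 = 3 ^ 1 := (pow_one 3).symm
    _ ≤ 3 ^ d := Nat.pow_le_pow_right (by norm_num) hd
  -- double counting identity
  have key : ∑ v ∈ S, (T.filter (fun t => t ∈ boxF v)).card
      = ∑ t ∈ T, (S.filter (fun v => t ∈ boxF v)).card := by
    simp only [Finset.card_filter]
    rw [Finset.sum_comm]
  -- lower bound for each v ∈ S
  have hA : ∀ v ∈ S, 2 ≤ (T.filter (fun t => t ∈ boxF v)).card := by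
    intro v hv
    have hsub : (boxF v).erase v ⊆ (S.filter ((torusGraph d fun _ => n).Adj v))
        ∪ (T.filter (fun t => t ∈ boxF v)) := by
      intro u hu
      rw [Finset.mem_erase] at hu
      by_cases huS : u ∈ S
      · exact Finset.mem_union_left _ (Finset.mem_filter.2 ⟨huS, adj_iff.2 ⟨hu.1, hu.2⟩⟩)
      · exact Finset.mem_union_right _ (Finset.mem_filter.2 ⟨Finset.mem_compl.2 huS, hu.2⟩)
    have h1 := Finset.card_le_card hsub
    have h2 := Finset.card_union_le (S.filter ((torusGraph d fun _ => n).Adj v))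
        (T.filter (fun t => t ∈ boxF v))
    have h3 : ((boxF v).erase v).card = 3 ^ d - 1 := by
      rw [Finset.card_erase_of_mem (self_mem_boxF v), card_boxF hn]
    have h4 := hS v hv
    omega
  have hB : ∀ t ∈ T, (S.filter (fun v => t ∈ boxF v)).card ≤ 3 ^ d - 1 := by
    intro t ht
    have hsub : (S.filter (fun v => t ∈ boxF v)) ⊆ (boxF t).erase t := by
      intro v hv
      rw [Finset.mem_filter] at hv
      refine Finset.mem_erase.2 ⟨?_, boxF_comm hv.2⟩
      intro hvt
      rw [Finset.mem_compl] at ht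
      exact ht (hvt ▸ hv.1)
    have := Finset.card_le_card hsub
    have h3 : ((boxF t).erase t).card ≤ 3 ^ d - 1 := by
      rw [Finset.card_erase_of_mem (self_mem_boxF t)]
      have := card_boxF_le t
      omega
    omega
  have hleft : 2 * S.card ≤ ∑ v ∈ S, (T.filter (fun t => t ∈ boxF v)).card := by
    calc 2 * S.card = ∑ _v ∈ S, 2 := by rw [Finset.sum_const, smul_eq_mul, mul_comm]
    _ ≤ _ := Finset.sum_le_sum hA
  have hright : ∑ t ∈ T, (S.filter (fun v => t ∈ boxF v)).card ≤ (3 ^ d - 1) * T.card := by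
    calc ∑ t ∈ T, (S.filter (fun v => t ∈ boxF v)).card ≤ ∑ _t ∈ T, (3 ^ d - 1) :=
      Finset.sum_le_sum hB
    _ = (3 ^ d - 1) * T.card := by rw [Finset.sum_const, smul_eq_mul, mul_comm]
  have hcardV : Fintype.card (∀ _ : Fin d, ZMod n) = n ^ d := by
    rw [Fintype.card_fun, ZMod.card, Fintype.card_fin]
  have hTcard : T.card = n ^ d - S.card := by
    rw [hT, Finset.card_compl, hcardV]
  have hScard : S.card ≤ n ^ d := by
    rw [← hcardV]; exact Finset.card_le_univ S
  have hmain : 2 * S.card ≤ (3 ^ d - 1) * (n ^ d - S.card) := by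
    rw [← hTcard]
    exact le_trans hleft (key ▸ hright)
  have h1 : 1 ≤ 3 ^ d := by omega
  zify [h1, hN3, hScard] at hmain ⊢
  ring_nf at hmain ⊢
  nlinarith [hmain]

/-- balanced ternary digit -/
def bdigN (s j : ℕ) : ℤ := ((s / 3 ^ j) % 3 : ℕ) - 1

lemma bdigN_mem (s j : ℕ) : bdigN s j = -1 ∨ bdigN s j = 0 ∨ bdigN s j = 1 := by
  have h : s / 3 ^ j % 3 < 3 := Nat.mod_lt _ (by norm_num)
  unfold bdigN
  omega

lemma sum_tern (d s : ℕ) : ∑ i ∈ Finset.range d, 3 ^ i * (s / 3 ^ i % 3) = s % 3 ^ d := by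
  induction d with
  | zero => simp [Nat.mod_one]
  | succ d ih => rw [Finset.sum_range_succ, ih, Nat.mod_pow_succ]

lemma geo_sum {d m : ℕ} (hm : 2 * m = 3 ^ d + 1) :
    ∑ i ∈ Finset.range d, (3 : ℤ) ^ i = (m : ℤ) - 1 := by
  have h1 := geom_sum_mul (3 : ℤ) d
  have h2 : ((3:ℤ)) ^ d = 2 * (m : ℤ) - 1 := by
    have h := congrArg (fun k : ℕ => (k : ℤ)) hm
    push_cast at h
    linarith
  rw [h2] at h1
  linarith

lemma bdig_sum {d m : ℕ} (hm : 2 * m = 3 ^ d + 1) {s : ℕ} (hs : s < 3 ^ d) :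
    ∑ i : Fin d, (3 : ℤ) ^ (i : ℕ) * bdigN s (i : ℕ) = (s : ℤ) - ((m : ℤ) - 1) := by
  rw [Fin.sum_univ_eq_sum_range (fun j => (3 : ℤ) ^ j * bdigN s j)]
  have h1 : ∀ j, (3 : ℤ) ^ j * bdigN s j = (3:ℤ)^j * ((s / 3 ^ j % 3 : ℕ) : ℤ) - (3:ℤ)^j := by
    intro j; rw [bdigN]; ring
  rw [Finset.sum_congr rfl (fun j _ => h1 j), Finset.sum_sub_distrib, geo_sum hm]
  have h2 : ∑ j ∈ Finset.range d, (3:ℤ)^j * ((s / 3 ^ j % 3 : ℕ) : ℤ) = (s : ℤ) := by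
    exact_mod_cast (sum_tern d s).trans (Nat.mod_eq_of_lt hs)
  rw [h2]

section Construction
variable {d n : ℕ}

def wsum (v : ∀ _ : Fin d, ZMod n) : ℕ := ∑ i : Fin d, 3 ^ (i : ℕ) * (v i).val

def goodS (d n m : ℕ) [NeZero n] : Finset (∀ _ : Fin d, ZMod n) :=
  Finset.univ.filter (fun v => (∀ i, 1 ≤ (v i).val ∧ (v i).val ≤ n - 2) ∧ ¬ (m ∣ wsum v))

lemma step_val (hn : 3 ≤ n) {v : ∀ _ : Fin d, ZMod n}
    (hv : ∀ i, 1 ≤ (v i).val ∧ (v i).val ≤ n - 2)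
    {ε : Fin d → ℤ} (hε : ∀ i, ε i = -1 ∨ ε i = 0 ∨ ε i = 1) (i : Fin d) :
    ((stepv v ε i).val : ℤ) = ((v i).val : ℤ) + ε i := by
  haveI : NeZero n := ⟨by omega⟩
  have hvi := hv i
  have hnz : (3 : ℤ) ≤ (n : ℤ) := by exact_mod_cast hn
  have hval : ((v i).val : ℤ) ≤ (n : ℤ) - 2 := by
    have := hvi.2
    omega
  have h0 : (((v i).val : ℤ) : ZMod n) = v i := by
    rw [Int.cast_natCast, ZMod.natCast_val, ZMod.cast_id]
  have h1 : stepv v ε i = ((((v i).val : ℤ) + ε i : ℤ) : ZMod n) := by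
    rw [stepv, Int.cast_add, h0]
  rw [h1, ZMod.val_intCast, Int.emod_eq_of_lt]
  · rcases hε i with h | h | h <;> rw [h] <;> push_cast <;> omega
  · rcases hε i with h | h | h <;> rw [h] <;> omega

lemma good_dep [NeZero n] (hn : 3 ≤ n) (hd : 1 ≤ d) {m : ℕ} (hm : 2 * m = 3 ^ d + 1) :
    ∀ v ∈ goodS d n m,
      (((goodS d n m).filter ((torusGraph d fun _ => n).Adj v)).card ≤ 3 ^ d - 3) := by
  intro v hv
  rw [goodS, Finset.mem_filter] at hv
  obtain ⟨-, hbox, hndvd⟩ := hv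
  have hN3 : 3 ≤ 3 ^ d := by
    calc 3 = 3 ^ 1 := (pow_one 3).symm
    _ ≤ 3 ^ d := Nat.pow_le_pow_right (by norm_num) hd
  have hm2 : 2 ≤ m := by omega
  set c := wsum v % m with hc
  have hc1 : 1 ≤ c := by
    rcases Nat.eq_zero_or_pos c with h | h
    · exact absurd (Nat.dvd_of_mod_eq_zero h) hndvd
    · exact h
  have hcm : c < m := Nat.mod_lt _ (by omega)
  -- generic properties of a balanced-ternary step
  have key : ∀ s : ℕ, s < 3 ^ d →
      (stepv v (fun i => bdigN s i) ∈ boxF v) ∧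
      ((wsum (stepv v (fun i => bdigN s i)) : ℤ) = (wsum v : ℤ) + (s : ℤ) - ((m : ℤ) - 1)) ∧
      (s ≠ m - 1 → stepv v (fun i => bdigN s i) ≠ v) := by
    intro s hs
    have hεmem : ∀ i : Fin d, bdigN s (i : ℕ) = -1 ∨ bdigN s (i:ℕ) = 0 ∨ bdigN s (i:ℕ) = 1 :=
      fun i => bdigN_mem s i
    have hval := step_val hn hbox hεmem
    have hmem : stepv v (fun i => bdigN s i) ∈ boxF v := by
      rw [mem_boxF]
      intro i
      have : stepv v (fun i => bdigN s i) i - v i = ((bdigN s (i:ℕ) : ℤ) : ZMod n) := by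
        show v i + ((bdigN s (i:ℕ) : ℤ) : ZMod n) - v i = _
        ring
      rw [this]
      rcases hεmem i with h | h | h <;> rw [h]
      · left; push_cast; ring
      · right; left; push_cast; ring
      · right; right; push_cast; ring
    have hws : (wsum (stepv v (fun i => bdigN s i)) : ℤ) = (wsum v : ℤ) + (s : ℤ) - ((m:ℤ) - 1) := by
      have h1 : (wsum (stepv v (fun i => bdigN s i)) : ℤ)
          = ∑ i : Fin d, (3:ℤ) ^ (i:ℕ) * ((stepv v (fun i => bdigN s i) i).val : ℤ) := by
        rw [wsum]; push_cast; rfl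
      have h2 : (wsum v : ℤ) = ∑ i : Fin d, (3:ℤ) ^ (i:ℕ) * ((v i).val : ℤ) := by
        rw [wsum]; push_cast; rfl
      rw [h1, h2]
      have h3 : ∀ i : Fin d, (3:ℤ) ^ (i:ℕ) * ((stepv v (fun i => bdigN s i) i).val : ℤ)
          = (3:ℤ) ^ (i:ℕ) * ((v i).val : ℤ) + (3:ℤ)^(i:ℕ) * bdigN s (i:ℕ) := by
        intro i; rw [hval i]; ring
      rw [Finset.sum_congr rfl (fun i _ => h3 i), Finset.sum_add_distrib, bdig_sum hm hs]
      ring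
    refine ⟨hmem, hws, ?_⟩
    intro hsne heq
    have : ∀ i : Fin d, bdigN s (i:ℕ) = 0 := by
      intro i
      have := hval i
      rw [heq] at this
      omega
    have h4 := bdig_sum hm hs
    rw [Finset.sum_congr rfl (fun i _ => by rw [this i, mul_zero])] at h4
    rw [Finset.sum_const_zero] at h4
    have : (s : ℤ) = (m : ℤ) - 1 := by omega
    omega
  -- the two escape vertices
  have hs1 : m - 1 - c < 3 ^ d := by omega
  have hs2 : 2 * m - 1 - c < 3 ^ d := by omega
  obtain ⟨hmem1, hws1, hne1⟩ := key (m - 1 - c) hs1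
  obtain ⟨hmem2, hws2, hne2⟩ := key (2 * m - 1 - c) hs2
  set u1 := stepv v (fun i => bdigN (m - 1 - c) i) with hu1
  set u2 := stepv v (fun i => bdigN (2 * m - 1 - c) i) with hu2
  have hcast1 : ((m - 1 - c : ℕ) : ℤ) = (m : ℤ) - 1 - (c : ℤ) := by omega
  have hcast2 : ((2 * m - 1 - c : ℕ) : ℤ) = 2 * (m : ℤ) - 1 - (c : ℤ) := by omega
  have hq : wsum v = m * (wsum v / m) + c := by rw [hc]; exact (Nat.div_add_mod _ _).symm
  have hqz : (wsum v : ℤ) = (m : ℤ) * ((wsum v / m : ℕ) : ℤ) + (c : ℤ) := by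
    exact_mod_cast hq
  have hdvd1 : m ∣ wsum u1 := by
    rw [← Int.natCast_dvd_natCast]
    refine ⟨((wsum v / m : ℕ) : ℤ), ?_⟩
    rw [hws1, hcast1]
    linarith
  have hdvd2 : m ∣ wsum u2 := by
    rw [← Int.natCast_dvd_natCast]
    refine ⟨((wsum v / m : ℕ) : ℤ) + 1, ?_⟩
    rw [hws2, hcast2]
    linarith
  have hne12 : u1 ≠ u2 := by
    intro h
    rw [h] at hws1
    rw [hws1] at hws2
    rw [hcast1, hcast2] at hws2
    omega
  have hvne1 : u1 ≠ v := hne1 (by omega)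
  have hvne2 : u2 ≠ v := hne2 (by omega)
  have hsub : (goodS d n m).filter ((torusGraph d fun _ => n).Adj v)
      ⊆ (boxF v) \ ({v, u1, u2} : Finset _) := by
    intro u hu
    rw [Finset.mem_filter] at hu
    obtain ⟨huS, hadj⟩ := hu
    rw [adj_iff] at hadj
    rw [goodS, Finset.mem_filter] at huS
    obtain ⟨-, -, hnd⟩ := huS
    rw [Finset.mem_sdiff]
    refine ⟨hadj.2, ?_⟩
    simp only [Finset.mem_insert, Finset.mem_singleton]
    push_neg
    exact ⟨hadj.1, fun h => hnd (h ▸ hdvd1), fun h => hnd (h ▸ hdvd2)⟩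
  have htri : ({v, u1, u2} : Finset _) ⊆ boxF v := by
    intro x hx
    simp only [Finset.mem_insert, Finset.mem_singleton] at hx
    rcases hx with h | h | h <;> rw [h]
    · exact self_mem_boxF v
    · exact hmem1
    · exact hmem2
  have hcard3 : ({v, u1, u2} : Finset (∀ _ : Fin d, ZMod n)).card = 3 := by
    rw [Finset.card_insert_of_notMem, Finset.card_insert_of_notMem, Finset.card_singleton]
    · simp only [Finset.mem_singleton]; exact hne12
    · simp only [Finset.mem_insert, Finset.mem_singleton]
      push_neg
      exact ⟨hvne1.symm, hvne2.symm⟩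
  calc ((goodS d n m).filter ((torusGraph d fun _ => n).Adj v)).card
      ≤ ((boxF v) \ ({v, u1, u2} : Finset _)).card := Finset.card_le_card hsub
    _ = (boxF v).card - 3 := by rw [Finset.card_sdiff_of_subset htri, hcard3]
    _ ≤ 3 ^ d - 3 := Nat.sub_le_sub_right (card_boxF_le v) 3

lemma good_card [NeZero n] (hn : 3 ≤ n) (d' m : ℕ) (hm0 : 0 < m) :
    (n - 2) ^ (d' + 1) ≤ (goodS (d' + 1) n m).card + (n / m + 1) * n ^ d' := by
  classical
  set C : Finset (∀ _ : Fin (d' + 1), ZMod n) :=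
    Finset.univ.filter (fun v => ∀ i, 1 ≤ (v i).val ∧ (v i).val ≤ n - 2) with hC
  -- lower bound on C
  have hCcard : (n - 2) ^ (d' + 1) ≤ C.card := by
    have hmaps : ∀ y ∈ (Finset.univ : Finset (∀ _ : Fin (d' + 1), Fin (n - 2))),
        (fun i => (((y i : ℕ) + 1 : ℕ) : ZMod n)) ∈ C := by
      intro y _
      rw [hC, Finset.mem_filter]
      refine ⟨Finset.mem_univ _, fun i => ?_⟩
      have hyi : (y i : ℕ) + 1 < n := by have := (y i).2; omega
      rw [ZMod.val_natCast, Nat.mod_eq_of_lt hyi]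
      have := (y i).2
      omega
    have hinj : Set.InjOn (fun (y : ∀ _ : Fin (d' + 1), Fin (n - 2)) =>
        (fun i => (((y i : ℕ) + 1 : ℕ) : ZMod n)))
        ↑(Finset.univ : Finset (∀ _ : Fin (d' + 1), Fin (n - 2))) := by
      intro y _ y' _ heq
      funext i
      have h1 := congrFun heq i
      have hyi : (y i : ℕ) + 1 < n := by have := (y i).2; omega
      have hyi' : (y' i : ℕ) + 1 < n := by have := (y' i).2; omega
      have h2 := congrArg ZMod.val h1
      rw [ZMod.val_natCast, Nat.mod_eq_of_lt hyi, ZMod.val_natCast, Nat.mod_eq_of_lt hyi'] at h2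
      exact Fin.ext (by omega)
    have hle := Finset.card_le_card_of_injOn _ hmaps hinj
    calc (n - 2) ^ (d' + 1) = (Finset.univ : Finset (∀ _ : Fin (d' + 1), Fin (n - 2))).card := by
          rw [Finset.card_univ, Fintype.card_fun, Fintype.card_fin, Fintype.card_fin]
      _ ≤ C.card := hle
  -- split C
  have hsplit : (C.filter (fun v => m ∣ wsum v)).card + (goodS (d' + 1) n m).card = C.card := by
    have h1 : goodS (d' + 1) n m = C.filter (fun v => ¬ m ∣ wsum v) := by
      ext v
      simp only [goodS, hC, Finset.mem_filter, Finset.mem_univ, true_and, and_assoc]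
    rw [h1]
    exact Finset.card_filter_add_card_filter_not _
  -- bound on the bad part
  set bad := C.filter (fun v => m ∣ wsum v) with hbad
  have hbadcard : bad.card ≤ (n / m + 1) * n ^ d' := by
    set pr : (∀ _ : Fin (d' + 1), ZMod n) → (∀ _ : Fin d', ZMod n) :=
      fun v => (fun j => v j.succ) with hpr
    have hfiber : ∀ a ∈ bad.image pr, (bad.filter (fun v => pr v = a)).card ≤ n / m + 1 := by
      intro a _
      rw [← Finset.card_range (n / m + 1)]
      refine Finset.card_le_card_of_injOn (fun v => (v 0).val / m)
        (fun v _ => ?_) ?_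
      · show (v 0).val / m ∈ Finset.range (n / m + 1)
        rw [Finset.mem_range]
        have h1 : (v 0).val < n := ZMod.val_lt _
        have h2 : (v 0).val / m ≤ n / m := Nat.div_le_div_right (Nat.le_of_lt h1)
        omega
      · intro v hv w hw heq
        simp only [Finset.coe_filter, Set.mem_setOf_eq] at hv hw
        obtain ⟨hvbad, hva⟩ := hv
        obtain ⟨hwbad, hwa⟩ := hw
        rw [hbad, Finset.mem_filter] at hvbad hwbad
        have hπ : pr v = pr w := by rw [hva, hwa]
        have hwsum : ∀ u : ∀ _ : Fin (d' + 1), ZMod n,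
            wsum u = (u 0).val + ∑ j : Fin d', 3 ^ ((j.succ : Fin (d'+1)) : ℕ) * (u j.succ).val := by
          intro u
          rw [wsum, Fin.sum_univ_succ]
          simp
        set R := ∑ j : Fin d', 3 ^ ((j.succ : Fin (d'+1)) : ℕ) * (v j.succ).val with hR
        have hRw : ∑ j : Fin d', 3 ^ ((j.succ : Fin (d'+1)) : ℕ) * (w j.succ).val = R := by
          rw [hR]
          refine Finset.sum_congr rfl (fun j _ => ?_)
          rw [show v j.succ = w j.succ from congrFun hπ j]
        have hv1 : m ∣ (v 0).val + R := by rw [← hwsum v]; exact hvbad.2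
        have hw1 : m ∣ (w 0).val + R := by rw [← hRw, ← hwsum w]; exact hwbad.2
        have hmod : (v 0).val % m = (w 0).val % m := by
          have h1 : (v 0).val + R ≡ 0 [MOD m] := (Nat.modEq_zero_iff_dvd).2 hv1
          have h2 : (w 0).val + R ≡ 0 [MOD m] := (Nat.modEq_zero_iff_dvd).2 hw1
          exact Nat.ModEq.add_right_cancel' R (h1.trans h2.symm)
        have heq' : (v 0).val / m = (w 0).val / m := heq
        have e1 := Nat.div_add_mod ((v 0).val) m
        have e2 := Nat.div_add_mod ((w 0).val) m
        rw [heq', hmod] at e1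
        have hval : (v 0).val = (w 0).val := e1.symm.trans e2
        have h00 : v 0 = w 0 := ZMod.val_injective n hval
        funext i
        refine Fin.cases ?_ ?_ i
        · exact h00
        · exact fun j => congrFun hπ j
    have h2 := Finset.card_le_mul_card_image bad (n / m + 1) hfiber
    have h3 : (bad.image pr).card ≤ n ^ d' := by
      calc (bad.image pr).card ≤ Fintype.card (∀ _ : Fin d', ZMod n) := Finset.card_le_univ _
      _ = n ^ d' := by rw [Fintype.card_fun, ZMod.card, Fintype.card_fin]
    calc bad.card ≤ (n / m + 1) * (bad.image pr).card := h2
    _ ≤ (n / m + 1) * n ^ d' := Nat.mul_le_mul_left _ h3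
  omega

end Construction

section Bridge

variable {d n : ℕ}

lemma ncard_inter_eq [NeZero n] (S : Set (∀ _ : Fin d, ZMod n)) (v : ∀ _ : Fin d, ZMod n) :
    (S ∩ (torusGraph d fun _ => n).neighborSet v).ncard
      = ((Set.toFinite S).toFinset.filter ((torusGraph d fun _ => n).Adj v)).card := by
  classical
  have h : S ∩ (torusGraph d fun _ => n).neighborSet v
      = ↑((Set.toFinite S).toFinset.filter ((torusGraph d fun _ => n).Adj v)) := by
    ext u
    simp only [Finset.coe_filter, Set.Finite.mem_toFinset, Set.mem_setOf_eq,
      Set.mem_inter_iff, SimpleGraph.mem_neighborSet]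
  rw [h, Set.ncard_coe_finset]

lemma betaK_torus_upper (hd : 1 ≤ d) (hn : 3 ≤ n) :
    (3 ^ d + 1) * betaK (torusGraph d fun _ => n) (3 ^ d - 3) ≤ (3 ^ d - 1) * n ^ d := by
  haveI : NeZero n := ⟨by omega⟩
  classical
  have hcardV : Fintype.card (∀ _ : Fin d, ZMod n) = n ^ d := by
    rw [Fintype.card_fun, ZMod.card, Fintype.card_fin]
  have hbdd : BddAbove {k | ∃ S : Set (∀ _ : Fin d, ZMod n),
      IsKDependent (torusGraph d fun _ => n) (3 ^ d - 3) S ∧ S.ncard = k} := by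
    refine ⟨n ^ d, fun k hk => ?_⟩
    obtain ⟨S, _, rfl⟩ := hk
    calc S.ncard ≤ (Set.univ : Set (∀ _ : Fin d, ZMod n)).ncard :=
        Set.ncard_le_ncard (Set.subset_univ S) Set.finite_univ
      _ = n ^ d := by rw [Set.ncard_univ, Nat.card_eq_fintype_card, hcardV]
  have hne : {k | ∃ S : Set (∀ _ : Fin d, ZMod n),
      IsKDependent (torusGraph d fun _ => n) (3 ^ d - 3) S ∧ S.ncard = k}.Nonempty := by
    exact ⟨0, ∅, fun v hv => absurd hv (Set.notMem_empty v), Set.ncard_empty _⟩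
  have hmem := Nat.sSup_mem hne hbdd
  obtain ⟨S, hdep, hcard⟩ := hmem
  rw [betaK, ← hcard]
  have hScard : S.ncard = (Set.toFinite S).toFinset.card := Set.ncard_eq_toFinset_card _ _
  rw [hScard]
  refine upper_count hn hd (Set.toFinite S).toFinset (fun v hv => ?_)
  rw [Set.Finite.mem_toFinset] at hv
  have := hdep v hv
  rwa [ncard_inter_eq] at this

lemma betaK_torus_lower (hd : 1 ≤ d) (hn : 3 ≤ n) {m : ℕ} (hm : 2 * m = 3 ^ d + 1) :
    (n - 2) ^ d ≤ betaK (torusGraph d fun _ => n) (3 ^ d - 3) + (n / m + 1) * n ^ (d - 1) := by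
  haveI : NeZero n := ⟨by omega⟩
  classical
  obtain ⟨d', rfl⟩ : ∃ d', d = d' + 1 := ⟨d - 1, by omega⟩
  have hcardV : Fintype.card (∀ _ : Fin (d' + 1), ZMod n) = n ^ (d' + 1) := by
    rw [Fintype.card_fun, ZMod.card, Fintype.card_fin]
  have hbdd : BddAbove {k | ∃ S : Set (∀ _ : Fin (d' + 1), ZMod n),
      IsKDependent (torusGraph (d' + 1) fun _ => n) (3 ^ (d' + 1) - 3) S ∧ S.ncard = k} := by
    refine ⟨n ^ (d' + 1), fun k hk => ?_⟩
    obtain ⟨S, _, rfl⟩ := hk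
    calc S.ncard ≤ (Set.univ : Set (∀ _ : Fin (d' + 1), ZMod n)).ncard :=
        Set.ncard_le_ncard (Set.subset_univ S) Set.finite_univ
      _ = n ^ (d' + 1) := by rw [Set.ncard_univ, Nat.card_eq_fintype_card, hcardV]
  have hmemA : (goodS (d' + 1) n m).card ∈ {k | ∃ S : Set (∀ _ : Fin (d' + 1), ZMod n),
      IsKDependent (torusGraph (d' + 1) fun _ => n) (3 ^ (d' + 1) - 3) S ∧ S.ncard = k} := by
    refine ⟨↑(goodS (d' + 1) n m), fun v hv => ?_, Set.ncard_coe_finset _⟩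
    rw [Finset.mem_coe] at hv
    rw [ncard_inter_eq]
    have hteq : (Set.toFinite (↑(goodS (d' + 1) n m) : Set (∀ _ : Fin (d'+1), ZMod n))).toFinset
        = goodS (d' + 1) n m := by
      ext u; simp [Set.Finite.mem_toFinset]; exact Iff.rfl
    rw [hteq]
    exact good_dep hn hd hm v hv
  have h1 : (goodS (d' + 1) n m).card ≤ betaK (torusGraph (d' + 1) fun _ => n) (3 ^ (d' + 1) - 3) :=
    le_csSup hbdd hmemA
  have h2 := good_card (n := n) hn d' m (by
    have h3 : 3 ≤ 3 ^ (d' + 1) := by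
      calc 3 = 3 ^ 1 := (pow_one 3).symm
      _ ≤ 3 ^ (d' + 1) := Nat.pow_le_pow_right (by norm_num) (by omega)
    omega)
  simp only [Nat.add_sub_cancel]
  omega

end Bridge

end Aux

/-- τ_{3^d−3}^(d) = (3^d − 1)/(3^d + 1); in particular
τ_6^(2) = 4/5 and τ_24^(3) = 13/14. -/
theorem stmt_13 (d : ℕ) (hd : 1 ≤ d) :
    Filter.Tendsto
      (fun n : ℕ => (betaK (torusGraph d (fun _ => n)) (3 ^ d - 3) : ℝ) / (n : ℝ) ^ d)
      Filter.atTop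
      (nhds (((3 : ℝ) ^ d - 1) / ((3 : ℝ) ^ d + 1))) := by
  obtain ⟨d', rfl⟩ : ∃ d', d = d' + 1 := ⟨d - 1, by omega⟩
  set D := d' + 1 with hD
  set m : ℕ := (3 ^ D + 1) / 2 with hmdef
  have hodd : 3 ^ D % 2 = 1 := by rw [Nat.pow_mod]; simp
  have hm : 2 * m = 3 ^ D + 1 := by omega
  have hN3 : 3 ≤ 3 ^ D := by
    calc 3 = 3 ^ 1 := (pow_one 3).symm
    _ ≤ 3 ^ D := Nat.pow_le_pow_right (by norm_num) hd
  have hmR : (m : ℝ) = ((3:ℝ) ^ D + 1) / 2 := by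
    have h := congrArg (fun k : ℕ => (k : ℝ)) hm
    push_cast at h
    linarith
  have hmpos : (0:ℝ) < m := by rw [hmR]; positivity
  have hP : (0:ℝ) < (3:ℝ) ^ D + 1 := by positivity
  have haval : ((3:ℝ) ^ D - 1) / ((3:ℝ) ^ D + 1) = 1 - 1 / (m:ℝ) - 0 := by
    rw [hmR]
    field_simp
    ring
  have hglim : Tendsto (fun n : ℕ => (1 - 2/(n:ℝ)) ^ D - 1/(m:ℝ) - 1/(n:ℝ)) atTop
      (𝓝 (((3:ℝ) ^ D - 1) / ((3:ℝ) ^ D + 1))) := by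
    rw [haval]
    have t0 : Tendsto (fun n : ℕ => (n:ℝ)) atTop atTop := tendsto_natCast_atTop_atTop
    have t1 : Tendsto (fun n : ℕ => 2/(n:ℝ)) atTop (𝓝 0) := tendsto_const_nhds.div_atTop t0
    have t2 : Tendsto (fun n : ℕ => 1/(n:ℝ)) atTop (𝓝 0) := tendsto_const_nhds.div_atTop t0
    have t3 : Tendsto (fun n : ℕ => (1 - 2/(n:ℝ)) ^ D) atTop (𝓝 1) := by
      have h4 : Tendsto (fun n : ℕ => 1 - 2/(n:ℝ)) atTop (𝓝 1) := by
        have := ((tendsto_const_nhds (x := (1:ℝ)) (f := atTop (α := ℕ))).sub t1)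
        simpa using this
      have := h4.pow D
      simpa using this
    exact (t3.sub tendsto_const_nhds).sub t2
  refine tendsto_of_tendsto_of_tendsto_of_le_of_le' hglim tendsto_const_nhds ?_ ?_
  · -- lower bound
    filter_upwards [eventually_ge_atTop 3] with n hn
    have hb := betaK_torus_lower (d := D) hd hn hm
    set B := betaK (torusGraph D fun _ => n) (3 ^ D - 3) with hB
    have hnR : (3:ℝ) ≤ (n:ℝ) := by exact_mod_cast hn
    have hnpos : (0:ℝ) < (n:ℝ) := by linarith
    have hn0 : (n:ℝ) ≠ 0 := ne_of_gt hnpos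
    have hm0 : (m:ℝ) ≠ 0 := ne_of_gt hmpos
    have hcast : ((n:ℝ) - 2) ^ D ≤ (B:ℝ) + (((n / m : ℕ) : ℝ) + 1) * (n:ℝ) ^ d' := by
      have h := (Nat.cast_le (α := ℝ)).2 hb
      have h2 : ((n - 2 : ℕ) : ℝ) = (n:ℝ) - 2 := by
        rw [Nat.cast_sub (by omega)]; norm_num
      rw [hD] at h ⊢
      push_cast [h2] at h
      simpa [Nat.add_sub_cancel] using h
    have hdivm : ((n / m : ℕ) : ℝ) ≤ (n:ℝ) / (m:ℝ) := Nat.cast_div_le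
    have hpow : (0:ℝ) ≤ (n:ℝ) ^ d' := pow_nonneg (le_of_lt hnpos) d'
    have hX : ((n:ℝ) - 2) ^ D - ((n:ℝ)/(m:ℝ) + 1) * (n:ℝ) ^ d' ≤ (B:ℝ) := by
      have h3 : (((n / m : ℕ) : ℝ) + 1) * (n:ℝ) ^ d' ≤ ((n:ℝ)/(m:ℝ) + 1) * (n:ℝ) ^ d' :=
        mul_le_mul_of_nonneg_right (by linarith) hpow
      linarith
    have hEq : (1 - 2/(n:ℝ)) ^ D - 1/(m:ℝ) - 1/(n:ℝ)
        = (((n:ℝ) - 2) ^ D - ((n:ℝ)/(m:ℝ) + 1) * (n:ℝ) ^ d') / (n:ℝ) ^ D := by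
      have h1 : (1 - 2/(n:ℝ)) = ((n:ℝ) - 2)/(n:ℝ) := by field_simp
      rw [h1, div_pow, hD]
      field_simp
      ring
    rw [hEq]
    have hpowD : (0:ℝ) < (n:ℝ) ^ D := pow_pos hnpos D
    exact (div_le_div_iff_of_pos_right hpowD).2 hX
  · filter_upwards [eventually_ge_atTop 3] with n hn
    have hb := betaK_torus_upper (d := D) hd hn
    set B := betaK (torusGraph D fun _ => n) (3 ^ D - 3) with hB
    have hnR : (3:ℝ) ≤ (n:ℝ) := by exact_mod_cast hn
    have hnpos : (0:ℝ) < (n:ℝ) := by linarith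
    have hpowD : (0:ℝ) < (n:ℝ) ^ D := pow_pos hnpos D
    have hcast : ((3:ℝ) ^ D + 1) * (B:ℝ) ≤ ((3:ℝ) ^ D - 1) * (n:ℝ) ^ D := by
      have h := (Nat.cast_le (α := ℝ)).2 hb
      have h2 : ((3 ^ D - 1 : ℕ) : ℝ) = (3:ℝ) ^ D - 1 := by
        rw [Nat.cast_sub (by omega)]; push_cast; norm_num
      push_cast [h2] at h
      convert h using 2 <;> push_cast <;> ring
    rw [div_le_div_iff₀ hpowD hP]
    linarith
end

section
/- Let G be a finite vertex-transitive simple graph, let k ≥ 0 be an integer, and let ω : V(G) → [0,∞) be a weighting function with total weight W(ω) = Σ_{v ∈ V(G)} ω(v) > 0. Let M_k(G,ω) be the maximum of Σ_{v ∈ S} ω(v) over all k-dependent sets S ⊆ V(G). Then τ_k(G) = β_k(G)/|V(G)| ≤ M_k(G,ω)/W(ω). -/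
open Filter Topology

lemma image_kdep {V : Type*} (G : SimpleGraph V) (k : ℕ) (f : G ≃g G) (S : Set V)
    (hS : IsKDependent G k S) : IsKDependent G k (f '' S) := by
  rintro v ⟨u, hu, rfl⟩
  have himg : f '' (S ∩ G.neighborSet u) = (f '' S) ∩ G.neighborSet (f u) := by
    ext w; constructor
    · rintro ⟨x, ⟨hxS, hxN⟩, rfl⟩
      exact ⟨⟨x, hxS, rfl⟩, f.map_adj_iff.mpr hxN⟩
    · rintro ⟨⟨x, hxS, rfl⟩, hN⟩
      exact ⟨x, ⟨hxS, f.map_adj_iff.mp hN⟩, rfl⟩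
  rw [← himg, Set.ncard_image_of_injective _ f.injective]
  exact hS u hu

/-- weighted upper bound for the k-dependent density of a
vertex-transitive graph. -/
theorem stmt_14 {V : Type*} [Fintype V] (G : SimpleGraph V)
    (hG : IsVertexTransitive G) (k : ℕ)
    (ω : V → ℝ) (hω : ∀ v, 0 ≤ ω v)
    (W : ℝ) (hW : W = ∑ v, ω v) (hWpos : 0 < W)
    (M : ℝ)
    (hM : M = sSup {x : ℝ |
        ∃ S : Finset V, IsKDependent G k ↑S ∧ ∑ v ∈ S, ω v = x}) :
    (betaK G k : ℝ) / (Fintype.card V : ℝ) ≤ M / W := by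
  classical
  have hVpos : 0 < Fintype.card V := by
    rcases Nat.eq_zero_or_pos (Fintype.card V) with h | h
    · exfalso
      have : IsEmpty V := Fintype.card_eq_zero_iff.mp h
      rw [hW] at hWpos
      simp [Finset.univ_eq_empty] at hWpos
    · exact h
  have hVne : Nonempty V := Fintype.card_pos_iff.mp hVpos
  obtain ⟨v0⟩ := hVne
  -- betaK is attained
  have hattain : ∃ B : Set V, IsKDependent G k B ∧ B.ncard = betaK G k := by
    have hne : (0 : ℕ) ∈ {m | ∃ S : Set V, IsKDependent G k S ∧ S.ncard = m} :=
      ⟨∅, fun v hv => absurd hv (Set.notMem_empty v), by simp⟩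
    have hbdd : BddAbove {m | ∃ S : Set V, IsKDependent G k S ∧ S.ncard = m} := by
      refine ⟨Fintype.card V, ?_⟩
      rintro m ⟨S, _, rfl⟩
      have := Set.ncard_le_ncard (Set.subset_univ S) (Set.finite_univ)
      rwa [Set.ncard_univ, Nat.card_eq_fintype_card] at this
    exact Nat.sSup_mem ⟨0, hne⟩ hbdd
  obtain ⟨B, hBdep, hBcard⟩ := hattain
  have hBfin : B.Finite := Set.toFinite B
  set Bfin : Finset V := hBfin.toFinset with hBfin'
  have hBcoe : (↑Bfin : Set V) = B := hBfin.coe_toFinset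
  have hBfincard : Bfin.card = betaK G k := by
    rw [← hBcard, Set.ncard_eq_toFinset_card B hBfin]
  -- M is an upper bound on weights of k-dependent finsets
  have hMub : ∀ S : Finset V, IsKDependent G k ↑S → ∑ v ∈ S, ω v ≤ M := by
    intro S hS
    rw [hM]
    apply le_csSup
    · apply Set.Finite.bddAbove
      have hsub : {x : ℝ | ∃ S : Finset V, IsKDependent G k ↑S ∧ ∑ v ∈ S, ω v = x} ⊆
          (fun S : Finset V => ∑ v ∈ S, ω v) '' Set.univ := by
        rintro x ⟨S, _, rfl⟩; exact ⟨S, trivial, rfl⟩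
      exact Set.Finite.subset (Set.Finite.image _ Set.finite_univ) hsub
    · exact ⟨S, hS, rfl⟩
  -- Automorphism group is a fintype
  letI : Fintype (G ≃g G) :=
    Fintype.ofInjective (fun f : G ≃g G => (f : V → V))
      (fun f g h => RelIso.ext (congrFun h))
  set N := Fintype.card (G ≃g G) with hN
  set T : V → V → Finset (G ≃g G) :=
    fun u v => Finset.univ.filter (fun f => f u = v) with hT
  -- cardinality of fibers is constant
  have hconst : ∀ u v, (T u v).card = (T v0 v0).card := by
    intro u v
    obtain ⟨g1, hg1⟩ := hG v0 u
    obtain ⟨g2, hg2⟩ := hG v v0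
    refine Finset.card_bij' (fun f _ => (g1.trans f).trans g2)
      (fun f _ => (g1.symm.trans f).trans g2.symm) ?_ ?_ ?_ ?_
    · intro f hf
      simp only [hT, Finset.mem_filter, Finset.mem_univ, true_and] at hf ⊢
      simp [RelIso.trans_apply, hg1, hf, hg2]
    · intro f hf
      simp only [hT, Finset.mem_filter, Finset.mem_univ, true_and] at hf ⊢
      have h1 : g1.symm u = v0 := by
        rw [← hg1]; exact g1.symm_apply_apply v0
      have h2 : g2.symm v0 = v := by
        rw [← hg2]; exact g2.symm_apply_apply v
      simp [RelIso.trans_apply, h1, hf, h2]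
    · intro f hf
      apply RelIso.ext; intro x
      simp [RelIso.trans_apply]
    · intro f hf
      apply RelIso.ext; intro x
      simp [RelIso.trans_apply]
  set c := (T v0 v0).card with hc
  -- fibers partition: sum of fiber cards = N
  have hfib : ∀ u : V, ∑ v : V, (T u v).card = N := by
    intro u
    rw [hN, ← Finset.card_univ]
    exact (Finset.card_eq_sum_card_fiberwise (fun f _ => Finset.mem_univ (f u))).symm
  have hNc : N = Fintype.card V * c := by
    rw [← hfib v0]
    simp only [hconst]
    rw [Finset.sum_const, Finset.card_univ, smul_eq_mul]
  have hcpos : 0 < c := by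
    have hNpos : 0 < N := Fintype.card_pos_iff.mpr ⟨RelIso.refl _⟩
    rcases Nat.eq_zero_or_pos c with h0 | h0
    · rw [hNc, h0, mul_zero] at hNpos; omega
    · exact h0
  -- key sum identity
  have hkey : ∀ u : V, ∑ f : G ≃g G, ω (f u) = (c : ℝ) * W := by
    intro u
    have hpart := Finset.sum_fiberwise (Finset.univ : Finset (G ≃g G))
      (fun f => f u) (fun f => ω (f u))
    rw [← hpart]
    have hfibsum : ∀ v : V, ∑ f ∈ Finset.univ.filter (fun f : G ≃g G => f u = v),
        ω (f u) = (c : ℝ) * ω v := by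
      intro v
      have : ∀ f ∈ Finset.univ.filter (fun f : G ≃g G => f u = v), ω (f u) = ω v := by
        intro f hf
        rw [Finset.mem_filter] at hf
        rw [hf.2]
      rw [Finset.sum_congr rfl this, Finset.sum_const, nsmul_eq_mul]
      congr 1
      exact_mod_cast congrArg Nat.cast (hconst u v)
    calc ∑ v : V, ∑ f ∈ Finset.univ.filter (fun f : G ≃g G => f u = v), ω (f u)
        = ∑ v : V, (c : ℝ) * ω v := Finset.sum_congr rfl (fun v _ => hfibsum v)
      _ = (c : ℝ) * W := by rw [← Finset.mul_sum, hW]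
  -- each translated set has weight ≤ M
  have hsum2 : ∀ f : G ≃g G, ∑ u ∈ Bfin, ω (f u) ≤ M := by
    intro f
    have hinj : ∀ x ∈ Bfin, ∀ y ∈ Bfin, f x = f y → x = y :=
      fun x _ y _ h => f.injective h
    rw [← Finset.sum_image hinj]
    apply hMub
    have : (↑(Bfin.image f) : Set V) = f '' B := by
      rw [Finset.coe_image, hBcoe]
    rw [this]
    exact image_kdep G k f B hBdep
  -- total sum two ways
  have hmain : (Bfin.card : ℝ) * ((c : ℝ) * W) ≤ (N : ℝ) * M := by
    have h1 : ∑ f : G ≃g G, ∑ u ∈ Bfin, ω (f u) = (Bfin.card : ℝ) * ((c : ℝ) * W) := by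
      rw [Finset.sum_comm]
      rw [Finset.sum_congr rfl (fun u _ => hkey u), Finset.sum_const, nsmul_eq_mul]
    have h2 : ∑ f : G ≃g G, ∑ u ∈ Bfin, ω (f u) ≤ ∑ _f : G ≃g G, M :=
      Finset.sum_le_sum (fun f _ => hsum2 f)
    rw [h1] at h2
    calc (Bfin.card : ℝ) * ((c : ℝ) * W) ≤ ∑ _f : G ≃g G, M := h2
      _ = (N : ℝ) * M := by rw [Finset.sum_const, Finset.card_univ, nsmul_eq_mul]
  rw [div_le_div_iff₀ (by exact_mod_cast hVpos) hWpos]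
  have hcR : (0 : ℝ) < (c : ℝ) := by exact_mod_cast hcpos
  have hNR : (N : ℝ) = (Fintype.card V : ℝ) * (c : ℝ) := by exact_mod_cast hNc
  rw [hNR] at hmain
  rw [← hBfincard]
  nlinarith [hmain, hcR]
end

section
/- For every dimension d ≥ 1, the sequence β_1(T^(d)[n])/n^d converges to 2^(2−d)·3^(−1) = 4/(3·2^d) as n → ∞; that is, the 1-dependent limiting density τ_1^(d) for d-dimensional toroidal kings graphs equals 2^(2−d)/3. -/
open Filter Topology

open Filter Topology Finset

namespace Stmt17

variable {d n : ℕ}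

def inBox {d n : ℕ} (t v : ∀ _ : Fin d, ZMod n) : Prop := ∀ i, v i = t i ∨ v i = t i + 1

lemma box_clique (hn : 3 ≤ n) {t u v : ∀ _ : Fin d, ZMod n} (hu : inBox t u) (hv : inBox t v)
    (huv : u ≠ v) : (torusGraph d fun _ => n).Adj u v := by
  refine ⟨huv, fun i => ?_⟩
  rcases hu i with h1 | h1 <;> rcases hv i with h2 | h2 <;> rw [h1, h2] <;> simp

lemma one_ne_zero_zmod (hn : 3 ≤ n) : (1 : ZMod n) ≠ 0 := by
  haveI : NeZero n := ⟨by omega⟩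
  intro h
  have h2 := (ZMod.natCast_eq_zero_iff 1 n).mp (by exact_mod_cast h)
  have := Nat.le_of_dvd one_pos h2
  omega

lemma two_ne_zero_zmod (hn : 3 ≤ n) : (2 : ZMod n) ≠ 0 := by
  haveI : NeZero n := ⟨by omega⟩
  intro h
  have h2 := (ZMod.natCast_eq_zero_iff 2 n).mp (by exact_mod_cast h)
  have := Nat.le_of_dvd (by norm_num) h2
  omega

lemma window_card (hn : 3 ≤ n) [NeZero n] (a : ZMod n) [DecidablePred fun t : ZMod n => a = t ∨ a = t + 1] :
    (univ.filter fun t : ZMod n => a = t ∨ a = t + 1).card = 2 := by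
  classical
  have : (univ.filter fun t : ZMod n => a = t ∨ a = t + 1) = {a, a - 1} := by
    ext t
    simp only [mem_filter, mem_univ, true_and, mem_insert, mem_singleton]
    constructor
    · rintro (h | h)
      · left; exact h.symm
      · right; rw [h]; ring
    · rintro (h | h)
      · left; exact h.symm
      · right; rw [h]; ring
  rw [this, card_insert_of_notMem, card_singleton]
  simp only [mem_singleton]
  intro h
  apply one_ne_zero_zmod hn
  linear_combination h

lemma window_pair_sub (hn : 3 ≤ n) {a b x y : ZMod n} (hab : a ≠ b)
    (hx : (a = x ∨ a = x + 1) ∧ (b = x ∨ b = x + 1))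
    (hy : (a = y ∨ a = y + 1) ∧ (b = y ∨ b = y + 1)) : x = y := by
  have h2 := two_ne_zero_zmod (n := n) hn
  have key : ∀ z w : ZMod n, z = a → w = a - 1 →
      ((b = z ∨ b = z + 1) → (b = w ∨ b = w + 1) → False) := by
    intro z w hz hw hbz hbw
    subst hz; subst hw
    rcases hbz with hb | hb
    · exact hab hb.symm
    · rcases hbw with hb' | hb'
      · exact h2 (by linear_combination hb' - hb)
      · exact hab (by rw [hb']; ring)
  have hx' : x = a ∨ x = a - 1 := by
    rcases hx.1 with h | h
    · left; exact h.symm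
    · right; rw [h]; ring
  have hy' : y = a ∨ y = a - 1 := by
    rcases hy.1 with h | h
    · left; exact h.symm
    · right; rw [h]; ring
  rcases hx' with hx' | hx' <;> rcases hy' with hy' | hy'
  · rw [hx', hy']
  · exact absurd (key x y hx' hy' hx.2 hy.2) not_false
  · exact absurd (key y x hy' hx' hy.2 hx.2) not_false
  · rw [hx', hy']

lemma filter_pi_card {α : Type*} [Fintype α] [DecidableEq α] (P : Fin d → α → Prop)
    [∀ i, DecidablePred (P i)] :
    (univ.filter fun t : ∀ _ : Fin d, α => ∀ i, P i (t i)).card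
      = ∏ i, (univ.filter (P i)).card := by
  classical
  rw [← Fintype.card_piFinset]
  congr 1
  ext t
  simp [Fintype.mem_piFinset]

lemma card_boxes_vertex (hn : 3 ≤ n) [NeZero n] (v : ∀ _ : Fin d, ZMod n)
    [DecidablePred fun t => inBox t v] :
    (univ.filter fun t => inBox t v).card = 2 ^ d := by
  classical
  have hEq : (univ.filter fun t => inBox t v)
      = univ.filter fun t : ∀ _ : Fin d, ZMod n =>
          ∀ i, (fun (i : Fin d) (x : ZMod n) => v i = x ∨ v i = x + 1) i (t i) := by
    apply filter_congr; intro t _; simp [inBox]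
  rw [hEq]
  have hpc := filter_pi_card (P := fun (i : Fin d) (x : ZMod n) => v i = x ∨ v i = x + 1)
  rw [show (filter (fun t : ∀ _ : Fin d, ZMod n => ∀ i, (fun (i : Fin d) (x : ZMod n) => v i = x ∨ v i = x + 1) i (t i)) univ).card
      = ∏ i, (univ.filter fun x : ZMod n => v i = x ∨ v i = x + 1).card from by convert hpc using 2]
  have : ∀ i : Fin d, (univ.filter fun x : ZMod n => v i = x ∨ v i = x + 1).card = 2 :=
    fun i => window_card hn (v i)
  simp only [this]
  rw [Finset.prod_const, card_univ, Fintype.card_fin]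

lemma card_boxes_pair (hd : 1 ≤ d) (hn : 3 ≤ n) [NeZero n] {u v : ∀ _ : Fin d, ZMod n}
    (huv : u ≠ v) [DecidablePred fun t => inBox t u ∧ inBox t v] :
    (univ.filter fun t => inBox t u ∧ inBox t v).card ≤ 2 ^ (d - 1) := by
  classical
  have hEq : (univ.filter fun t => inBox t u ∧ inBox t v)
      = univ.filter fun t : ∀ _ : Fin d, ZMod n =>
          ∀ i, (fun (i : Fin d) (x : ZMod n) =>
            (u i = x ∨ u i = x + 1) ∧ (v i = x ∨ v i = x + 1)) i (t i) := by
    apply filter_congr; intro t _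
    simp only [inBox, eq_iff_iff]
    constructor
    · rintro ⟨h1, h2⟩ i; exact ⟨h1 i, h2 i⟩
    · intro h; exact ⟨fun i => (h i).1, fun i => (h i).2⟩
  rw [hEq]
  have hpc := filter_pi_card (P := fun (i : Fin d) (x : ZMod n) =>
    (u i = x ∨ u i = x + 1) ∧ (v i = x ∨ v i = x + 1))
  rw [show (filter (fun t : ∀ _ : Fin d, ZMod n => ∀ i, (fun (i : Fin d) (x : ZMod n) =>
        (u i = x ∨ u i = x + 1) ∧ (v i = x ∨ v i = x + 1)) i (t i)) univ).card
      = ∏ i, (univ.filter fun x : ZMod n =>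
        (u i = x ∨ u i = x + 1) ∧ (v i = x ∨ v i = x + 1)).card from by convert hpc using 2]
  obtain ⟨i0, hi0⟩ : ∃ i, u i ≠ v i := Function.ne_iff.mp huv
  rw [← Finset.mul_prod_erase univ _ (mem_univ i0)]
  have h1 : (univ.filter fun x : ZMod n =>
      (u i0 = x ∨ u i0 = x + 1) ∧ (v i0 = x ∨ v i0 = x + 1)).card ≤ 1 := by
    rw [Finset.card_le_one]
    intro x hx y hy
    simp only [mem_filter] at hx hy
    exact window_pair_sub hn hi0 hx.2 hy.2
  have h2 : ∀ i ∈ univ.erase i0, (univ.filter fun x : ZMod n =>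
      (u i = x ∨ u i = x + 1) ∧ (v i = x ∨ v i = x + 1)).card ≤ 2 := by
    intro i _
    calc (univ.filter fun x : ZMod n =>
        (u i = x ∨ u i = x + 1) ∧ (v i = x ∨ v i = x + 1)).card
        ≤ (univ.filter fun x : ZMod n => u i = x ∨ u i = x + 1).card :=
          Finset.card_le_card (by intro x hx; simp only [mem_filter] at hx ⊢; exact ⟨hx.1, hx.2.1⟩)
      _ = 2 := window_card hn (u i)
  calc (univ.filter fun x : ZMod n =>
        (u i0 = x ∨ u i0 = x + 1) ∧ (v i0 = x ∨ v i0 = x + 1)).card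
      * ∏ i ∈ univ.erase i0, (univ.filter fun x : ZMod n =>
        (u i = x ∨ u i = x + 1) ∧ (v i = x ∨ v i = x + 1)).card
      ≤ 1 * 2 ^ (univ.erase i0).card :=
        Nat.mul_le_mul h1 (Finset.prod_le_pow_card _ _ 2 h2)
    _ = 2 ^ (d - 1) := by
        rw [one_mul, Finset.card_erase_of_mem (mem_univ i0), card_univ, Fintype.card_fin]

lemma card_V (hn : 3 ≤ n) [NeZero n] :
    Fintype.card (∀ _ : Fin d, ZMod n) = n ^ d := by
  rw [Fintype.card_pi]
  simp [ZMod.card]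

lemma pow_split (d : ℕ) (hd : 1 ≤ d) : (2:ℕ) ^ d = 2 * 2 ^ (d - 1) := by
  obtain ⟨e, rfl⟩ : ∃ e, d = e + 1 := ⟨d - 1, by omega⟩
  simp [pow_succ, mul_comm]

lemma mul_pred (c : ℕ) : c * (c - 1) = c * c - c := by
  cases c with
  | zero => simp
  | succ k => rw [Nat.succ_sub_one, Nat.mul_succ]; omega

lemma upper_bound (hd : 1 ≤ d) (hn : 3 ≤ n) (S : Set (∀ _ : Fin d, ZMod n))
    (hS : IsKDependent (torusGraph d fun _ => n) 1 S) :
    3 * (2 ^ (d - 1) * S.ncard) ≤ 2 * n ^ d := by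
  classical
  haveI : NeZero n := ⟨by omega⟩
  set G := torusGraph d fun _ => n with hG
  have hfin : S.Finite := Set.toFinite S
  set Sf : Finset (∀ _ : Fin d, ZMod n) := hfin.toFinset with hSf
  have hmem : ∀ v, v ∈ Sf ↔ v ∈ S := fun v => Set.Finite.mem_toFinset hfin
  have hcard : S.ncard = Sf.card := by rw [hSf, Set.ncard_eq_toFinset_card _ hfin]
  have hnb : ∀ u ∈ Sf, (Sf.filter fun v => G.Adj u v).card ≤ 1 := by
    intro u hu
    have h := hS u ((hmem u).mp hu)
    have hset : ((Sf.filter fun v => G.Adj u v) : Set _) = S ∩ G.neighborSet u := by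
      ext v
      simp only [Finset.coe_filter, Set.mem_setOf_eq, Set.mem_inter_iff,
        SimpleGraph.mem_neighborSet, hmem]
      try tauto
    calc (Sf.filter fun v => G.Adj u v).card
        = (S ∩ G.neighborSet u).ncard := by rw [← hset, Set.ncard_coe_finset]
      _ ≤ 1 := h
  set c : (∀ _ : Fin d, ZMod n) → ℕ := fun t => (Sf.filter fun v => inBox t v).card with hc
  have sum_c : ∑ t, c t = 2 ^ d * Sf.card := by
    calc ∑ t, c t = ∑ t, ∑ v ∈ Sf, if inBox t v then 1 else 0 :=
          Finset.sum_congr rfl fun t _ => Finset.card_filter _ _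
      _ = ∑ v ∈ Sf, ∑ t, if inBox t v then 1 else 0 := Finset.sum_comm
      _ = ∑ v ∈ Sf, (univ.filter fun t => inBox t v).card :=
          Finset.sum_congr rfl fun v _ => (Finset.card_filter _ _).symm
      _ = ∑ v ∈ Sf, 2 ^ d := Finset.sum_congr rfl fun v _ => card_boxes_vertex hn v
      _ = 2 ^ d * Sf.card := by rw [Finset.sum_const, smul_eq_mul, mul_comm]
  have c_le : ∀ t, c t ≤ 2 := by
    intro t
    by_contra hlt
    push_neg at hlt
    have hct : c t = (Sf.filter fun v => inBox t v).card := rfl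
    obtain ⟨u, hu⟩ : ∃ u, u ∈ Sf.filter fun v => inBox t v :=
      Finset.card_pos.mp (by omega)
    have h2 : 1 < ((Sf.filter fun v => inBox t v).erase u).card := by
      rw [Finset.card_erase_of_mem hu]; omega
    obtain ⟨a, ha, b, hb, hab⟩ := Finset.one_lt_card.mp h2
    have hane := Finset.ne_of_mem_erase ha
    have hbne := Finset.ne_of_mem_erase hb
    have hau := Finset.mem_of_mem_erase ha
    have hbu := Finset.mem_of_mem_erase hb
    simp only [Finset.mem_filter] at hau hbu hu
    have hadj_a : G.Adj u a := box_clique hn hu.2 hau.2 (Ne.symm hane)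
    have hadj_b : G.Adj u b := box_clique hn hu.2 hbu.2 (Ne.symm hbne)
    have hlt2 : 1 < (S ∩ G.neighborSet u).ncard := by
      rw [Set.one_lt_ncard_iff (hfin.inter_of_left _)]
      exact ⟨a, b, ⟨(hmem a).mp hau.1, hadj_a⟩, ⟨(hmem b).mp hbu.1, hadj_b⟩, hab⟩
    have := hS u ((hmem u).mp hu.1)
    omega
  have sum_pairs : ∑ t, c t * (c t - 1) ≤ 2 ^ (d - 1) * Sf.card := by
    have hoff : ∀ t : ∀ _ : Fin d, ZMod n, (Sf.filter fun v => inBox t v).offDiag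
        = Sf.offDiag.filter fun p => inBox t p.1 ∧ inBox t p.2 := by
      intro t; ext p
      simp only [Finset.mem_offDiag, Finset.mem_filter]
      tauto
    have h1 : ∀ t : ∀ _ : Fin d, ZMod n, c t * (c t - 1)
        = (Sf.offDiag.filter fun p => inBox t p.1 ∧ inBox t p.2).card := by
      intro t
      rw [← hoff, Finset.offDiag_card, ← mul_pred]
    have hprod : Sf.offDiag = (Sf ×ˢ Sf).filter fun p => p.1 ≠ p.2 := by
      ext p; simp only [Finset.mem_offDiag, Finset.mem_filter, Finset.mem_product]; tauto
    have inner : ∀ u ∈ Sf, (∑ v ∈ Sf, if u ≠ v then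
        (univ.filter fun t => inBox t u ∧ inBox t v).card else 0) ≤ 2 ^ (d - 1) := by
      intro u hu
      set A := Sf.filter fun v => G.Adj u v with hA
      have hsub : A ⊆ Sf := Finset.filter_subset _ _
      have hzero : ∀ v ∈ Sf, v ∉ A → (if u ≠ v then
          (univ.filter fun t => inBox t u ∧ inBox t v).card else 0) = 0 := by
        intro v hv hvA
        by_cases huv : u = v
        · simp [huv]
        · rw [if_pos huv, Finset.card_eq_zero, Finset.filter_eq_empty_iff]
          intro t _
          rintro ⟨h1', h2'⟩
          exact hvA (Finset.mem_filter.mpr ⟨hv, box_clique hn h1' h2' huv⟩)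
      rw [← Finset.sum_subset hsub hzero]
      have hterm : ∀ v ∈ A, (if u ≠ v then
          (univ.filter fun t => inBox t u ∧ inBox t v).card else 0) ≤ 2 ^ (d - 1) := by
        intro v hv
        have hadj : G.Adj u v := (Finset.mem_filter.mp hv).2
        have huv : u ≠ v := hadj.ne
        rw [if_pos huv]
        exact card_boxes_pair hd hn huv
      calc ∑ v ∈ A, (if u ≠ v then
            (univ.filter fun t => inBox t u ∧ inBox t v).card else 0)
          ≤ A.card * 2 ^ (d - 1) := by
            have := Finset.sum_le_card_nsmul A _ _ hterm
            simpa [smul_eq_mul] using this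
        _ ≤ 1 * 2 ^ (d - 1) := Nat.mul_le_mul_right _ (hnb u hu)
        _ = 2 ^ (d - 1) := one_mul _
    calc ∑ t, c t * (c t - 1)
        = ∑ t, (Sf.offDiag.filter fun p => inBox t p.1 ∧ inBox t p.2).card :=
          Finset.sum_congr rfl fun t _ => h1 t
      _ = ∑ t, ∑ p ∈ Sf.offDiag, (if inBox t p.1 ∧ inBox t p.2 then 1 else 0) :=
          Finset.sum_congr rfl fun t _ => Finset.card_filter _ _
      _ = ∑ p ∈ Sf.offDiag, (univ.filter fun t => inBox t p.1 ∧ inBox t p.2).card := by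
          rw [Finset.sum_comm]
          exact Finset.sum_congr rfl fun p _ => (Finset.card_filter _ _).symm
      _ = ∑ u ∈ Sf, ∑ v ∈ Sf, (if u ≠ v then
            (univ.filter fun t => inBox t u ∧ inBox t v).card else 0) := by
          rw [hprod, Finset.sum_filter, Finset.sum_product]
      _ ≤ ∑ u ∈ Sf, 2 ^ (d - 1) := Finset.sum_le_sum inner
      _ = Sf.card * 2 ^ (d - 1) := by rw [Finset.sum_const, smul_eq_mul]
      _ = 2 ^ (d - 1) * Sf.card := mul_comm _ _
  have key : 2 * ∑ t, c t ≤ 2 * n ^ d + ∑ t, c t * (c t - 1) := by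
    calc 2 * ∑ t, c t = ∑ t, 2 * c t := Finset.mul_sum _ _ _
      _ ≤ ∑ t, (2 + c t * (c t - 1)) := by
          apply Finset.sum_le_sum
          intro t _
          have h := c_le t
          have : c t = 0 ∨ c t = 1 ∨ c t = 2 := by omega
          rcases this with h' | h' | h' <;> rw [h'] <;> norm_num
      _ = (∑ _t : ∀ _ : Fin d, ZMod n, 2) + ∑ t, c t * (c t - 1) :=
          Finset.sum_add_distrib
      _ = 2 * n ^ d + ∑ t, c t * (c t - 1) := by
          rw [Finset.sum_const, smul_eq_mul, card_univ, card_V hn, mul_comm]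
  rw [hcard]
  have e1 : 2 * (2 ^ d * Sf.card) = 4 * (2 ^ (d - 1) * Sf.card) := by
    rw [pow_split d hd]; ring
  rw [sum_c] at key
  have h5 := le_trans key (Nat.add_le_add_left sum_pairs _)
  linarith [h5, e1]

lemma zmod_diff (hn : 3 ≤ n) [NeZero n] {a b : ZMod n} (ha : a.val < n - 1) (hb : b.val < n - 1)
    (h : b - a = -1 ∨ b - a = 0 ∨ b - a = 1) :
    b.val = a.val + 1 ∨ b.val = a.val ∨ a.val = b.val + 1 := by
  haveI : Fact (1 < n) := ⟨by omega⟩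
  rcases h with h | h | h
  · right; right
    have hba : a = b + 1 := by linear_combination -h
    rw [hba, ZMod.val_add, ZMod.val_one, Nat.mod_eq_of_lt (by omega)]
  · right; left
    have hba : b = a := by linear_combination h
    rw [hba]
  · left
    have hba : b = a + 1 := by linear_combination h
    rw [hba, ZMod.val_add, ZMod.val_one, Nat.mod_eq_of_lt (by omega)]

lemma filter_range_succ (P : ℕ → Prop) [DecidablePred P] (a : ℕ) :
    ((Finset.range (a+1)).filter P).card
      = ((Finset.range a).filter P).card + (if P a then 1 else 0) := by
  rw [Finset.range_add_one, Finset.filter_insert]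
  split_ifs with h
  · rw [Finset.card_insert_of_notMem (by simp)]
  · simp

lemma count_even (q : ℕ) : ((Finset.range (6*q)).filter fun a => a % 2 = 0).card = 3 * q := by
  induction q with
  | zero => simp
  | succ k ih =>
    have h6 : 6 * (k+1) = 6*k + 1 + 1 + 1 + 1 + 1 + 1 := by ring
    rw [h6, filter_range_succ, filter_range_succ, filter_range_succ, filter_range_succ,
      filter_range_succ, filter_range_succ, ih]
    split_ifs <;> omega

lemma count_mod3 (q : ℕ) : ((Finset.range (6*q)).filter fun a => a % 3 ≠ 2).card = 4 * q := by
  induction q with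
  | zero => simp
  | succ k ih =>
    have h6 : 6 * (k+1) = 6*k + 1 + 1 + 1 + 1 + 1 + 1 := by ring
    rw [h6, filter_range_succ, filter_range_succ, filter_range_succ, filter_range_succ,
      filter_range_succ, filter_range_succ, ih]
    split_ifs <;> omega

lemma card_zmod_filter [NeZero n] (P : ℕ → Prop) [DecidablePred P] :
    ((univ : Finset (ZMod n)).filter fun x => P x.val).card
      = ((Finset.range n).filter P).card := by
  apply Finset.card_bij (fun (x : ZMod n) _ => x.val)
  · intro x hx
    simp only [Finset.mem_filter, Finset.mem_range] at *
    exact ⟨ZMod.val_lt x, hx.2⟩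
  · intro x _ y _ h
    exact ZMod.val_injective n h
  · intro a ha
    simp only [Finset.mem_filter, Finset.mem_range] at ha
    refine ⟨(a : ZMod n), ?_, ?_⟩
    · simp only [Finset.mem_filter, Finset.mem_univ, true_and]
      rw [ZMod.val_cast_of_lt ha.1]
      exact ha.2
    · rw [ZMod.val_cast_of_lt ha.1]

lemma range_filter_lt (P : ℕ → Prop) [DecidablePred P] {m k : ℕ} (hmk : m ≤ k) :
    ((Finset.range k).filter fun a => a < m ∧ P a).card
      = ((Finset.range m).filter P).card := by
  congr 1
  ext a
  simp only [Finset.mem_filter, Finset.mem_range]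
  constructor
  · rintro ⟨_, h1, h2⟩; exact ⟨h1, h2⟩
  · rintro ⟨h1, h2⟩; exact ⟨by omega, h1, h2⟩

lemma lower_bound (hd : 1 ≤ d) (hn : 9 ≤ n) :
    ∃ S : Set (∀ _ : Fin d, ZMod n), IsKDependent (torusGraph d fun _ => n) 1 S ∧
      S.ncard = 4 * ((n-2)/6) * (3 * ((n-2)/6)) ^ (d - 1) := by
  classical
  haveI : NeZero n := ⟨by omega⟩
  set q := (n-2)/6 with hq
  set m := 6*q with hm
  have hq1 : 1 ≤ q := by omega
  have hm2 : m ≤ n - 2 := by omega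
  set i0 : Fin d := ⟨0, hd⟩ with hi0
  set A : Fin d → Finset (ZMod n) := fun i =>
    univ.filter fun x => x.val < m ∧ (if (i : ℕ) = 0 then x.val % 3 ≠ 2 else x.val % 2 = 0)
    with hA
  refine ⟨↑(Fintype.piFinset A), ?_, ?_⟩
  · -- 1-dependence
    intro v hv
    rw [Set.ncard_le_one (Set.toFinite _)]
    rintro u ⟨huS, huN⟩ w ⟨hwS, hwN⟩
    rw [Finset.mem_coe, Fintype.mem_piFinset] at hv huS hwS
    -- basic facts about members
    have hval : ∀ (z : ∀ _ : Fin d, ZMod n), (∀ i, z i ∈ A i) → ∀ i,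
        (z i).val < m ∧ (if (i : ℕ) = 0 then (z i).val % 3 ≠ 2 else (z i).val % 2 = 0) := by
      intro z hz i
      have := hz i
      rw [hA, Finset.mem_filter] at this
      exact this.2
    have hvv := hval v hv
    have huu := hval u huS
    have hww := hval w hwS
    obtain ⟨hne_u, hdiff_u⟩ := huN
    obtain ⟨hne_w, hdiff_w⟩ := hwN
    -- coordinates i with (i:ℕ) ≠ 0 agree with v
    have hcoord : ∀ (z : ∀ _ : Fin d, ZMod n), (∀ i, z i ∈ A i) →
        (∀ i, z i - v i = -1 ∨ z i - v i = 0 ∨ z i - v i = 1) →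
        ∀ i : Fin d, (i : ℕ) ≠ 0 → z i = v i := by
      intro z hz hdz i hi
      have h1 := (hval z hz i)
      have h2 := hvv i
      rw [if_neg hi] at h1 h2
      have hd1 := zmod_diff (by omega) (by omega) (by omega) (hdz i)
      apply ZMod.val_injective
      omega
    have hu_coord := hcoord u huS hdiff_u
    have hw_coord := hcoord w hwS hdiff_w
    -- first coordinate
    have hu0 : u i0 ≠ v i0 := by
      intro h
      apply hne_u.symm
      funext i
      by_cases hi : (i : ℕ) = 0
      · have : i = i0 := Fin.ext hi
        rw [this, h]
      · exact hu_coord i hi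
    have hw0 : w i0 ≠ v i0 := by
      intro h
      apply hne_w.symm
      funext i
      by_cases hi : (i : ℕ) = 0
      · have : i = i0 := Fin.ext hi
        rw [this, h]
      · exact hw_coord i hi
    have hu0v : (u i0).val ≠ (v i0).val := fun h => hu0 (ZMod.val_injective n h)
    have hw0v : (w i0).val ≠ (v i0).val := fun h => hw0 (ZMod.val_injective n h)
    have hv3 := hvv i0; have hu3 := huu i0; have hw3 := hww i0
    rw [if_pos (by simp [hi0])] at hv3 hu3 hw3
    have hdu := zmod_diff (n := n) (by omega) (by omega) (by omega) (hdiff_u i0)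
    have hdw := zmod_diff (n := n) (by omega) (by omega) (by omega) (hdiff_w i0)
    funext i
    by_cases hi : (i : ℕ) = 0
    · have hii : i = i0 := Fin.ext hi
      rw [hii]
      apply ZMod.val_injective
      omega
    · rw [hu_coord i hi, hw_coord i hi]
  · -- cardinality
    rw [Set.ncard_coe_finset, Fintype.card_piFinset]
    have hcA : ∀ i : Fin d, (A i).card = if (i : ℕ) = 0 then 4*q else 3*q := by
      intro i
      by_cases hi : (i : ℕ) = 0
      · rw [if_pos hi]
        rw [show A i = univ.filter (fun x : ZMod n => x.val < m ∧ x.val % 3 ≠ 2) from by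
          rw [hA]; exact Finset.filter_congr fun x _ => by rw [if_pos hi]]
        rw [card_zmod_filter (fun a => a < m ∧ a % 3 ≠ 2),
          range_filter_lt _ (by omega), hm, count_mod3]
      · rw [if_neg hi]
        rw [show A i = univ.filter (fun x : ZMod n => x.val < m ∧ x.val % 2 = 0) from by
          rw [hA]; exact Finset.filter_congr fun x _ => by rw [if_neg hi]]
        rw [card_zmod_filter (fun a => a < m ∧ a % 2 = 0),
          range_filter_lt _ (by omega), hm, count_even]
    calc ∏ i, (A i).card = ∏ i : Fin d, (if (i : ℕ) = 0 then 4*q else 3*q) :=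
          Finset.prod_congr rfl fun i _ => hcA i
      _ = (if (i0 : ℕ) = 0 then 4*q else 3*q)
            * ∏ i ∈ univ.erase i0, (if (i : ℕ) = 0 then 4*q else 3*q) :=
          (Finset.mul_prod_erase univ _ (mem_univ i0)).symm
      _ = 4 * q * (3*q) ^ (d-1) := by
          rw [if_pos (by simp [hi0])]
          congr 1
          calc ∏ i ∈ univ.erase i0, (if (i : ℕ) = 0 then 4*q else 3*q)
              = ∏ _i ∈ univ.erase i0, 3*q := by
                apply Finset.prod_congr rfl
                intro i hi
                rw [if_neg]
                intro h
                exact (Finset.ne_of_mem_erase hi) (Fin.ext h)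
            _ = (3*q) ^ (d-1) := by
                rw [Finset.prod_const, Finset.card_erase_of_mem (mem_univ i0),
                  card_univ, Fintype.card_fin]

lemma betaK_bounds (hd : 1 ≤ d) (hn : 9 ≤ n) :
    4 * ((n-2)/6) * (3 * ((n-2)/6)) ^ (d-1) ≤ betaK (torusGraph d fun _ => n) 1 ∧
    3 * (2^(d-1) * betaK (torusGraph d fun _ => n) 1) ≤ 2 * n ^ d := by
  have hbdd : BddAbove {m | ∃ S : Set (∀ _ : Fin d, ZMod n),
      IsKDependent (torusGraph d fun _ => n) 1 S ∧ S.ncard = m} := by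
    refine ⟨2 * n ^ d, ?_⟩
    rintro m ⟨S, hS, rfl⟩
    have h := upper_bound hd (by omega) S hS
    have h1 : 1 ≤ 2^(d-1) := Nat.one_le_two_pow
    nlinarith
  have hne : {m | ∃ S : Set (∀ _ : Fin d, ZMod n),
      IsKDependent (torusGraph d fun _ => n) 1 S ∧ S.ncard = m}.Nonempty := by
    refine ⟨0, ∅, ?_, Set.ncard_empty _⟩
    intro v hv
    exact absurd hv (Set.notMem_empty v)
  constructor
  · apply le_csSup hbdd
    obtain ⟨S, h1, h2⟩ := lower_bound hd hn
    exact ⟨S, h1, h2⟩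
  · obtain ⟨S, hS, hcard⟩ := Nat.sSup_mem hne hbdd
    rw [betaK, ← hcard]
    exact upper_bound hd (by omega) S hS

end Stmt17

open Stmt17 in
theorem stmt_17' (d : ℕ) (hd : 1 ≤ d) :
    Filter.Tendsto
      (fun n : ℕ => (betaK (torusGraph d (fun _ => n)) 1 : ℝ) / (n : ℝ) ^ d)
      Filter.atTop (nhds (4 / (3 * (2 : ℝ) ^ d))) := by
  obtain ⟨e, rfl⟩ : ∃ e, d = e + 1 := ⟨d - 1, by omega⟩
  set c : ℝ := 4 / (3 * 2 ^ (e+1)) with hc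
  have hc0 : 0 < c := by positivity
  have hub : ∀ n : ℕ, 9 ≤ n →
      (betaK (torusGraph (e+1) (fun _ => n)) 1 : ℝ) / (n : ℝ) ^ (e+1) ≤ c := by
    intro n hn
    have h := (betaK_bounds (d := e+1) (n := n) (by omega) hn).2
    simp only [Nat.add_sub_cancel] at h
    have hcast : (3:ℝ) * (2^e * (betaK (torusGraph (e+1) (fun _ => n)) 1 : ℝ))
        ≤ 2 * (n:ℝ) ^ (e+1) := by exact_mod_cast h
    have hn0 : (0:ℝ) < n := by exact_mod_cast (by omega : 0 < n)
    rw [hc, div_le_div_iff₀ (by positivity) (by positivity)]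
    calc (betaK (torusGraph (e+1) (fun _ => n)) 1 : ℝ) * (3 * 2 ^ (e+1))
        = 2 * (3 * (2^e * (betaK (torusGraph (e+1) (fun _ => n)) 1 : ℝ))) := by ring
      _ ≤ 2 * (2 * (n:ℝ) ^ (e+1)) := by linarith
      _ = 4 * (n:ℝ) ^ (e+1) := by ring
  have hlb : ∀ n : ℕ, 9 ≤ n →
      c * (((n:ℝ) - 7)/n) ^ (e+1)
        ≤ (betaK (torusGraph (e+1) (fun _ => n)) 1 : ℝ) / (n : ℝ) ^ (e+1) := by
    intro n hn
    set q : ℕ := (n-2)/6 with hq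
    have h := (betaK_bounds (d := e+1) (n := n) (by omega) hn).1
    simp only [Nat.add_sub_cancel] at h
    have hcast : 4 * (q:ℝ) * (3*(q:ℝ))^e ≤ (betaK (torusGraph (e+1) (fun _ => n)) 1 : ℝ) := by
      exact_mod_cast h
    have hn0 : (0:ℝ) < n := by exact_mod_cast (by omega : 0 < n)
    have hq7 : (n:ℝ) - 7 ≤ 6 * (q:ℝ) := by
      have h7 : n - 7 ≤ 6 * q := by omega
      have hcast7 : ((n:ℝ) - 7) = ((n - 7 : ℕ) : ℝ) := by
        rw [Nat.cast_sub (by omega : 7 ≤ n)]; norm_num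
      rw [hcast7]
      exact_mod_cast h7
    have hbase : (0:ℝ) ≤ ((n:ℝ) - 7)/n := by
      apply div_nonneg _ hn0.le
      have : (9:ℝ) ≤ n := by exact_mod_cast hn
      linarith
    have t1 : (((n:ℝ) - 7)/n) ^ (e+1) ≤ ((6*(q:ℝ))/n) ^ (e+1) := by
      apply pow_le_pow_left₀ hbase
      exact div_le_div_of_nonneg_right hq7 hn0.le
    have e2 : c * ((6*(q:ℝ))/n) ^ (e+1) = (4 * (q:ℝ) * (3*(q:ℝ))^e) / (n:ℝ) ^ (e+1) := by
      rw [hc, div_pow]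
      rw [show (6:ℝ) * (q:ℝ) = (2*3) * q by norm_num]
      field_simp
      ring_nf
      rw [show (6:ℝ)^e = 2^e*3^e by rw [← mul_pow]; norm_num]
      ring
    calc c * (((n:ℝ) - 7)/n) ^ (e+1)
        ≤ c * ((6*(q:ℝ))/n) ^ (e+1) := by
          apply mul_le_mul_of_nonneg_left t1 hc0.le
      _ = (4 * (q:ℝ) * (3*(q:ℝ))^e) / (n:ℝ) ^ (e+1) := e2
      _ ≤ (betaK (torusGraph (e+1) (fun _ => n)) 1 : ℝ) / (n : ℝ) ^ (e+1) := by
          apply div_le_div_of_nonneg_right hcast (by positivity)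
  -- the squeeze
  have hone : Filter.Tendsto (fun n : ℕ => ((n:ℝ) - 7)/n) Filter.atTop (nhds 1) := by
    have heq : ∀ᶠ n : ℕ in Filter.atTop, 1 - 7 * (1/(n:ℝ)) = ((n:ℝ) - 7)/n := by
      filter_upwards [Filter.eventually_ge_atTop 1] with n hn
      have hn0 : (n:ℝ) ≠ 0 := by
        have : (1:ℝ) ≤ n := by exact_mod_cast hn
        linarith
      field_simp
    have h0 : Filter.Tendsto (fun n : ℕ => 1 - 7 * (1/(n:ℝ))) Filter.atTop (nhds (1 - 7 * 0)) :=
      (tendsto_const_nhds.sub (tendsto_one_div_atTop_nhds_zero_nat.const_mul 7))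
    rw [show (1:ℝ) - 7 * 0 = 1 by norm_num] at h0
    exact Filter.Tendsto.congr' heq h0
  have hlim : Filter.Tendsto (fun n : ℕ => c * (((n:ℝ) - 7)/n) ^ (e+1))
      Filter.atTop (nhds c) := by
    have := ((hone.pow (e+1)).const_mul c)
    rw [show c * (1:ℝ) ^ (e+1) = c by norm_num] at this
    exact this
  refine tendsto_of_tendsto_of_tendsto_of_le_of_le' hlim tendsto_const_nhds ?_ ?_
  · filter_upwards [Filter.eventually_ge_atTop 9] with n hn
    exact hlb n hn
  · filter_upwards [Filter.eventually_ge_atTop 9] with n hn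
    exact hub n hn

/-- τ_1^(d) = 2^(2−d)/3 = 4/(3·2^d). -/
theorem stmt_17 (d : ℕ) (hd : 1 ≤ d) :
    Filter.Tendsto
      (fun n : ℕ => (betaK (torusGraph d (fun _ => n)) 1 : ℝ) / (n : ℝ) ^ d)
      Filter.atTop (nhds (4 / (3 * (2 : ℝ) ^ d))) := by
  exact stmt_17' d hd
end

section
/- For all integers m, n ≥ 3, every 3-dependent set of vertices in the two-dimensional toroidal kings graph T[m,n] has cardinality at most mn/2. -/
open Filter Topology

namespace Stmt18Aux

def b2i (b : Bool) : ℤ := cond b 1 0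

def tabH : List Int :=
  [0, 1, 2, 0, 0, 0, 0, -2, 0, -1, 0, 0, 1, 0, -1, 0, 0, 0, 2, 0, 0, 0, 0, -2, 1, -1, 1, 0, 2, 0, 0, 0, 2, 2, 3, 1, 2, 2, 3, 1, 2, 1, 2, 2, 1, 0, 0, 0, 2, 2, 3, 1, 2, 2, 3, 1, 4, 2, 4, 3, 2, 0, 0, 0]

def tabV : List Int :=
  [0, 0, -1, 1, 1, 1, -2, 0, 1, 1, 0, 2, 2, 2, -1, 1, 3, 4, 2, 2, 3, 3, 0, -1, 3, 4, 4, 3, 3, 3, 2, 0, 0, 0, -3, -1, 0, 0, -2, 0, 0, 0, -1, 1, 0, 0, 0, 2, 2, 3, 0, 0, 0, 0, 0, 0, 2, 3, 3, 0, 0, 0, 0, 0]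

def bidx (x0 x1 x2 x3 x4 x5 : Bool) : ℕ :=
  x0.toNat + 2 * x1.toNat + 4 * x2.toNat + 8 * x3.toNat + 16 * x4.toNat + 32 * x5.toNat

def HH (x0 x1 x2 x3 x4 x5 : Bool) : ℤ := tabH.getD (bidx x0 x1 x2 x3 x4 x5) 0
def HV (x0 x1 x2 x3 x4 x5 : Bool) : ℤ := tabV.getD (bidx x0 x1 x2 x3 x4 x5) 0

theorem key : ∀ b00 b01 b02 b10 b11 b12 b20 b21 b22 : Bool,
    (b11 = true →
      b2i b00 + b2i b01 + b2i b02 + b2i b10 + b2i b12 + b2i b20 + b2i b21 + b2i b22 ≤ 3) →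
    4 * b2i b11
      + HH b01 b02 b11 b12 b21 b22 - HH b00 b01 b10 b11 b20 b21
      + HV b10 b11 b12 b20 b21 b22 - HV b00 b01 b02 b10 b11 b12 ≤ 2 := by
  decide

def mk (m n : ℕ) (a : ZMod m) (b : ZMod n) : ∀ i : Fin 2, ZMod (![m, n] i) :=
  Fin.cons a (Fin.cons b finZeroElim)

lemma mk_add_mk (m n : ℕ) (a c : ZMod m) (b d : ZMod n) :
    mk m n a b + mk m n c d = mk m n (a + c) (b + d) := by
  funext i; fin_cases i <;> rfl

lemma mk_inj {m n : ℕ} {a c : ZMod m} {b d : ZMod n}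
    (h : mk m n a b = mk m n c d) : a = c ∧ b = d :=
  ⟨congrFun h 0, congrFun h 1⟩

lemma zfacts (k : ℕ) (hk : 3 ≤ k) :
    ((0 : ZMod k) ≠ 1 ∧ (0 : ZMod k) ≠ 2 ∧ (1 : ZMod k) ≠ 2) := by
  have h1 : (1 : ZMod k) ≠ 0 := by
    intro h
    rw [show (1 : ZMod k) = ((1 : ℕ) : ZMod k) by push_cast; ring,
      ZMod.natCast_eq_zero_iff] at h
    have := Nat.le_of_dvd one_pos h; omega
  have h2 : (2 : ZMod k) ≠ 0 := by
    intro h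
    rw [show (2 : ZMod k) = ((2 : ℕ) : ZMod k) by push_cast; ring,
      ZMod.natCast_eq_zero_iff] at h
    have := Nat.le_of_dvd two_pos h; omega
  refine ⟨fun h => h1 h.symm, fun h => h2 h.symm, fun h => h1 (by linear_combination -h)⟩

end Stmt18Aux

/-- every 3-dependent set in T[m,n] has at most mn/2 vertices. -/
theorem stmt_18 (m n : ℕ) (hm : 3 ≤ m) (hn : 3 ≤ n)
    (S : Set (∀ i : Fin 2, ZMod (![m, n] i)))
    (hS : IsKDependent (torusGraph 2 ![m, n]) 3 S) :
    (S.ncard : ℝ) ≤ (m : ℝ) * (n : ℝ) / 2 := by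
  classical
  obtain ⟨zm01, zm02, zm12⟩ := Stmt18Aux.zfacts m hm
  obtain ⟨zn01, zn02, zn12⟩ := Stmt18Aux.zfacts n hn
  haveI : NeZero m := ⟨by omega⟩
  haveI : NeZero n := ⟨by omega⟩
  haveI instNZ : ∀ i : Fin 2, NeZero (![m, n] i) := by
    intro i; fin_cases i
    · exact show NeZero m from ⟨by omega⟩
    · exact show NeZero n from ⟨by omega⟩
  letI instFT : ∀ i : Fin 2, Fintype (ZMod (![m, n] i)) := fun i => ZMod.fintype _
  set sb : (∀ i : Fin 2, ZMod (![m, n] i)) → Bool := fun v => decide (v ∈ S) with hsb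
  have hb2 : ∀ u, Stmt18Aux.b2i (sb u) = if u ∈ S then 1 else 0 := by
    intro u; by_cases h : u ∈ S <;> simp [hsb, Stmt18Aux.b2i, h]
  have comb : ∀ (w : ∀ i : Fin 2, ZMod (![m, n] i)) (a c : ZMod m) (b d : ZMod n),
      w + Stmt18Aux.mk m n a b + Stmt18Aux.mk m n c d = w + Stmt18Aux.mk m n (a + c) (b + d) := by
    intro w a c b d; rw [add_assoc, Stmt18Aux.mk_add_mk]
  have cellne : ∀ (w : ∀ i : Fin 2, ZMod (![m, n] i)) (a c : ZMod m) (b d : ZMod n),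
      (a ≠ c ∨ b ≠ d) → w + Stmt18Aux.mk m n a b ≠ w + Stmt18Aux.mk m n c d := by
    intro w a c b d hd h
    have h2 := add_left_cancel h
    rcases Stmt18Aux.mk_inj h2 with ⟨e1, e2⟩
    rcases hd with hd | hd
    · exact hd e1
    · exact hd e2
  have subcell : ∀ (w : ∀ i : Fin 2, ZMod (![m, n] i)) (a c : ZMod m) (b d : ZMod n) (i : Fin 2),
      (w + Stmt18Aux.mk m n a b) i - (w + Stmt18Aux.mk m n c d) i = (Stmt18Aux.mk m n a b) i - (Stmt18Aux.mk m n c d) i := by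
    intro w a c b d i
    show (w i + (Stmt18Aux.mk m n a b) i) - (w i + (Stmt18Aux.mk m n c d) i) = _
    ring
  have hdeg : ∀ w, w + Stmt18Aux.mk m n 1 1 ∈ S →
      Stmt18Aux.b2i (sb (w + Stmt18Aux.mk m n 0 0)) + Stmt18Aux.b2i (sb (w + Stmt18Aux.mk m n 0 1)) + Stmt18Aux.b2i (sb (w + Stmt18Aux.mk m n 0 2)) + Stmt18Aux.b2i (sb (w + Stmt18Aux.mk m n 1 0)) + Stmt18Aux.b2i (sb (w + Stmt18Aux.mk m n 1 2)) + Stmt18Aux.b2i (sb (w + Stmt18Aux.mk m n 2 0)) + Stmt18Aux.b2i (sb (w + Stmt18Aux.mk m n 2 1)) + Stmt18Aux.b2i (sb (w + Stmt18Aux.mk m n 2 2)) ≤ 3 := by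
    intro w hv
    have hcard := hS _ hv
    have adj00 : (torusGraph 2 ![m, n]).Adj (w + Stmt18Aux.mk m n 1 1) (w + Stmt18Aux.mk m n 0 0) := by
      refine ⟨cellne w 1 0 1 0 (Or.inl (Ne.symm zm01)), ?_⟩
      intro i
      rw [subcell]
      fin_cases i
      · exact Or.inl (by show (0 : ZMod m) - 1 = -1; ring)
      · exact Or.inl (by show (0 : ZMod n) - 1 = -1; ring)
    have adj01 : (torusGraph 2 ![m, n]).Adj (w + Stmt18Aux.mk m n 1 1) (w + Stmt18Aux.mk m n 0 1) := by
      refine ⟨cellne w 1 0 1 1 (Or.inl (Ne.symm zm01)), ?_⟩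
      intro i
      rw [subcell]
      fin_cases i
      · exact Or.inl (by show (0 : ZMod m) - 1 = -1; ring)
      · exact Or.inr (Or.inl (by show (1 : ZMod n) - 1 = 0; ring))
    have adj02 : (torusGraph 2 ![m, n]).Adj (w + Stmt18Aux.mk m n 1 1) (w + Stmt18Aux.mk m n 0 2) := by
      refine ⟨cellne w 1 0 1 2 (Or.inl (Ne.symm zm01)), ?_⟩
      intro i
      rw [subcell]
      fin_cases i
      · exact Or.inl (by show (0 : ZMod m) - 1 = -1; ring)
      · exact Or.inr (Or.inr (by show (2 : ZMod n) - 1 = 1; ring))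
    have adj10 : (torusGraph 2 ![m, n]).Adj (w + Stmt18Aux.mk m n 1 1) (w + Stmt18Aux.mk m n 1 0) := by
      refine ⟨cellne w 1 1 1 0 (Or.inr (Ne.symm zn01)), ?_⟩
      intro i
      rw [subcell]
      fin_cases i
      · exact Or.inr (Or.inl (by show (1 : ZMod m) - 1 = 0; ring))
      · exact Or.inl (by show (0 : ZMod n) - 1 = -1; ring)
    have adj12 : (torusGraph 2 ![m, n]).Adj (w + Stmt18Aux.mk m n 1 1) (w + Stmt18Aux.mk m n 1 2) := by
      refine ⟨cellne w 1 1 1 2 (Or.inr zn12), ?_⟩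
      intro i
      rw [subcell]
      fin_cases i
      · exact Or.inr (Or.inl (by show (1 : ZMod m) - 1 = 0; ring))
      · exact Or.inr (Or.inr (by show (2 : ZMod n) - 1 = 1; ring))
    have adj20 : (torusGraph 2 ![m, n]).Adj (w + Stmt18Aux.mk m n 1 1) (w + Stmt18Aux.mk m n 2 0) := by
      refine ⟨cellne w 1 2 1 0 (Or.inl zm12), ?_⟩
      intro i
      rw [subcell]
      fin_cases i
      · exact Or.inr (Or.inr (by show (2 : ZMod m) - 1 = 1; ring))
      · exact Or.inl (by show (0 : ZMod n) - 1 = -1; ring)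
    have adj21 : (torusGraph 2 ![m, n]).Adj (w + Stmt18Aux.mk m n 1 1) (w + Stmt18Aux.mk m n 2 1) := by
      refine ⟨cellne w 1 2 1 1 (Or.inl zm12), ?_⟩
      intro i
      rw [subcell]
      fin_cases i
      · exact Or.inr (Or.inr (by show (2 : ZMod m) - 1 = 1; ring))
      · exact Or.inr (Or.inl (by show (1 : ZMod n) - 1 = 0; ring))
    have adj22 : (torusGraph 2 ![m, n]).Adj (w + Stmt18Aux.mk m n 1 1) (w + Stmt18Aux.mk m n 2 2) := by
      refine ⟨cellne w 1 2 1 2 (Or.inl zm12), ?_⟩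
      intro i
      rw [subcell]
      fin_cases i
      · exact Or.inr (Or.inr (by show (2 : ZMod m) - 1 = 1; ring))
      · exact Or.inr (Or.inr (by show (2 : ZMod n) - 1 = 1; ring))
    set T : Finset _ := insert (w + Stmt18Aux.mk m n 0 0) (insert (w + Stmt18Aux.mk m n 0 1) (insert (w + Stmt18Aux.mk m n 0 2) (insert (w + Stmt18Aux.mk m n 1 0) (insert (w + Stmt18Aux.mk m n 1 2) (insert (w + Stmt18Aux.mk m n 2 0) (insert (w + Stmt18Aux.mk m n 2 1) ({w + Stmt18Aux.mk m n 2 2}))))))) with hT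
    have notmem0 : w + Stmt18Aux.mk m n 0 0 ∉ (insert (w + Stmt18Aux.mk m n 0 1) (insert (w + Stmt18Aux.mk m n 0 2) (insert (w + Stmt18Aux.mk m n 1 0) (insert (w + Stmt18Aux.mk m n 1 2) (insert (w + Stmt18Aux.mk m n 2 0) (insert (w + Stmt18Aux.mk m n 2 1) ({w + Stmt18Aux.mk m n 2 2})))))) : Finset _) := by
      simp only [Finset.mem_insert, Finset.mem_singleton]
      push_neg
      exact ⟨cellne w 0 0 0 1 (Or.inr zn01), cellne w 0 0 0 2 (Or.inr zn02), cellne w 0 1 0 0 (Or.inl zm01), cellne w 0 1 0 2 (Or.inl zm01), cellne w 0 2 0 0 (Or.inl zm02), cellne w 0 2 0 1 (Or.inl zm02), cellne w 0 2 0 2 (Or.inl zm02)⟩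
    have notmem1 : w + Stmt18Aux.mk m n 0 1 ∉ (insert (w + Stmt18Aux.mk m n 0 2) (insert (w + Stmt18Aux.mk m n 1 0) (insert (w + Stmt18Aux.mk m n 1 2) (insert (w + Stmt18Aux.mk m n 2 0) (insert (w + Stmt18Aux.mk m n 2 1) ({w + Stmt18Aux.mk m n 2 2}))))) : Finset _) := by
      simp only [Finset.mem_insert, Finset.mem_singleton]
      push_neg
      exact ⟨cellne w 0 0 1 2 (Or.inr zn12), cellne w 0 1 1 0 (Or.inl zm01), cellne w 0 1 1 2 (Or.inl zm01), cellne w 0 2 1 0 (Or.inl zm02), cellne w 0 2 1 1 (Or.inl zm02), cellne w 0 2 1 2 (Or.inl zm02)⟩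
    have notmem2 : w + Stmt18Aux.mk m n 0 2 ∉ (insert (w + Stmt18Aux.mk m n 1 0) (insert (w + Stmt18Aux.mk m n 1 2) (insert (w + Stmt18Aux.mk m n 2 0) (insert (w + Stmt18Aux.mk m n 2 1) ({w + Stmt18Aux.mk m n 2 2})))) : Finset _) := by
      simp only [Finset.mem_insert, Finset.mem_singleton]
      push_neg
      exact ⟨cellne w 0 1 2 0 (Or.inl zm01), cellne w 0 1 2 2 (Or.inl zm01), cellne w 0 2 2 0 (Or.inl zm02), cellne w 0 2 2 1 (Or.inl zm02), cellne w 0 2 2 2 (Or.inl zm02)⟩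
    have notmem3 : w + Stmt18Aux.mk m n 1 0 ∉ (insert (w + Stmt18Aux.mk m n 1 2) (insert (w + Stmt18Aux.mk m n 2 0) (insert (w + Stmt18Aux.mk m n 2 1) ({w + Stmt18Aux.mk m n 2 2}))) : Finset _) := by
      simp only [Finset.mem_insert, Finset.mem_singleton]
      push_neg
      exact ⟨cellne w 1 1 0 2 (Or.inr zn02), cellne w 1 2 0 0 (Or.inl zm12), cellne w 1 2 0 1 (Or.inl zm12), cellne w 1 2 0 2 (Or.inl zm12)⟩
    have notmem4 : w + Stmt18Aux.mk m n 1 2 ∉ (insert (w + Stmt18Aux.mk m n 2 0) (insert (w + Stmt18Aux.mk m n 2 1) ({w + Stmt18Aux.mk m n 2 2})) : Finset _) := by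
      simp only [Finset.mem_insert, Finset.mem_singleton]
      push_neg
      exact ⟨cellne w 1 2 2 0 (Or.inl zm12), cellne w 1 2 2 1 (Or.inl zm12), cellne w 1 2 2 2 (Or.inl zm12)⟩
    have notmem5 : w + Stmt18Aux.mk m n 2 0 ∉ (insert (w + Stmt18Aux.mk m n 2 1) ({w + Stmt18Aux.mk m n 2 2}) : Finset _) := by
      simp only [Finset.mem_insert, Finset.mem_singleton]
      push_neg
      exact ⟨cellne w 2 2 0 1 (Or.inr zn01), cellne w 2 2 0 2 (Or.inr zn02)⟩
    have notmem6 : w + Stmt18Aux.mk m n 2 1 ∉ ({w + Stmt18Aux.mk m n 2 2} : Finset _) := by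
      simp only [Finset.mem_insert, Finset.mem_singleton]
      push_neg
      exact cellne w 2 2 1 2 (Or.inr zn12)
    have hsumT : (∑ u ∈ T, Stmt18Aux.b2i (sb u)) =
        Stmt18Aux.b2i (sb (w + Stmt18Aux.mk m n 0 0)) + Stmt18Aux.b2i (sb (w + Stmt18Aux.mk m n 0 1)) + Stmt18Aux.b2i (sb (w + Stmt18Aux.mk m n 0 2)) + Stmt18Aux.b2i (sb (w + Stmt18Aux.mk m n 1 0)) + Stmt18Aux.b2i (sb (w + Stmt18Aux.mk m n 1 2)) + Stmt18Aux.b2i (sb (w + Stmt18Aux.mk m n 2 0)) + Stmt18Aux.b2i (sb (w + Stmt18Aux.mk m n 2 1)) + Stmt18Aux.b2i (sb (w + Stmt18Aux.mk m n 2 2)) := by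
      rw [hT]
      rw [Finset.sum_insert notmem0, Finset.sum_insert notmem1, Finset.sum_insert notmem2,
        Finset.sum_insert notmem3, Finset.sum_insert notmem4, Finset.sum_insert notmem5,
        Finset.sum_insert notmem6, Finset.sum_singleton]
      ring
    have hsub : ↑(T.filter (· ∈ S)) ⊆ S ∩ (torusGraph 2 ![m, n]).neighborSet (w + Stmt18Aux.mk m n 1 1) := by
      intro x hx
      simp only [Finset.coe_filter, Set.mem_setOf_eq, hT, Finset.mem_insert,
        Finset.mem_singleton] at hx
      obtain ⟨hmem, hxS⟩ := hx
      refine ⟨hxS, ?_⟩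
      rcases hmem with rfl | rfl | rfl | rfl | rfl | rfl | rfl | rfl
      · exact adj00
      · exact adj01
      · exact adj02
      · exact adj10
      · exact adj12
      · exact adj20
      · exact adj21
      · exact adj22
    have hcount : ((T.filter (· ∈ S)).card : ℤ) ≤ 3 := by
      have h2 := Set.ncard_le_ncard hsub (Set.toFinite _)
      rw [Set.ncard_coe_finset] at h2
      exact_mod_cast le_trans h2 hcard
    calc Stmt18Aux.b2i (sb (w + Stmt18Aux.mk m n 0 0)) + Stmt18Aux.b2i (sb (w + Stmt18Aux.mk m n 0 1)) + Stmt18Aux.b2i (sb (w + Stmt18Aux.mk m n 0 2)) + Stmt18Aux.b2i (sb (w + Stmt18Aux.mk m n 1 0)) + Stmt18Aux.b2i (sb (w + Stmt18Aux.mk m n 1 2)) + Stmt18Aux.b2i (sb (w + Stmt18Aux.mk m n 2 0)) + Stmt18Aux.b2i (sb (w + Stmt18Aux.mk m n 2 1)) + Stmt18Aux.b2i (sb (w + Stmt18Aux.mk m n 2 2)) = ∑ u ∈ T, Stmt18Aux.b2i (sb u) := hsumT.symm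
      _ = ∑ u ∈ T, (if u ∈ S then (1 : ℤ) else 0) := Finset.sum_congr rfl (fun u _ => hb2 u)
      _ = ((T.filter (· ∈ S)).card : ℤ) := Finset.sum_boole _ _
      _ ≤ 3 := hcount
  set gH : (∀ i : Fin 2, ZMod (![m, n] i)) → ℤ :=
    fun w => Stmt18Aux.HH (sb (w + Stmt18Aux.mk m n 0 0)) (sb (w + Stmt18Aux.mk m n 0 1)) (sb (w + Stmt18Aux.mk m n 1 0)) (sb (w + Stmt18Aux.mk m n 1 1)) (sb (w + Stmt18Aux.mk m n 2 0)) (sb (w + Stmt18Aux.mk m n 2 1)) with hgH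
  set gV : (∀ i : Fin 2, ZMod (![m, n] i)) → ℤ :=
    fun w => Stmt18Aux.HV (sb (w + Stmt18Aux.mk m n 0 0)) (sb (w + Stmt18Aux.mk m n 0 1)) (sb (w + Stmt18Aux.mk m n 0 2)) (sb (w + Stmt18Aux.mk m n 1 0)) (sb (w + Stmt18Aux.mk m n 1 1)) (sb (w + Stmt18Aux.mk m n 1 2)) with hgV
  have eH : ∀ w, gH (w + Stmt18Aux.mk m n 0 1) = Stmt18Aux.HH (sb (w + Stmt18Aux.mk m n 0 1)) (sb (w + Stmt18Aux.mk m n 0 2)) (sb (w + Stmt18Aux.mk m n 1 1)) (sb (w + Stmt18Aux.mk m n 1 2)) (sb (w + Stmt18Aux.mk m n 2 1)) (sb (w + Stmt18Aux.mk m n 2 2)) := by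
    intro w
    rw [hgH]
    simp only []
    rw [comb w 0 0 1 0, comb w 0 0 1 1, comb w 0 1 1 0, comb w 0 1 1 1, comb w 0 2 1 0, comb w 0 2 1 1]
    norm_num
  have eV : ∀ w, gV (w + Stmt18Aux.mk m n 1 0) = Stmt18Aux.HV (sb (w + Stmt18Aux.mk m n 1 0)) (sb (w + Stmt18Aux.mk m n 1 1)) (sb (w + Stmt18Aux.mk m n 1 2)) (sb (w + Stmt18Aux.mk m n 2 0)) (sb (w + Stmt18Aux.mk m n 2 1)) (sb (w + Stmt18Aux.mk m n 2 2)) := by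
    intro w
    rw [hgV]
    simp only []
    rw [comb w 1 0 0 0, comb w 1 0 0 1, comb w 1 0 0 2, comb w 1 1 0 0, comb w 1 1 0 1, comb w 1 1 0 2]
    norm_num
  have key_w : ∀ w, 4 * Stmt18Aux.b2i (sb (w + Stmt18Aux.mk m n 1 1))
      + (gH (w + Stmt18Aux.mk m n 0 1) - gH w) + (gV (w + Stmt18Aux.mk m n 1 0) - gV w) ≤ 2 := by
    intro w
    have hcon : sb (w + Stmt18Aux.mk m n 1 1) = true →
        Stmt18Aux.b2i (sb (w + Stmt18Aux.mk m n 0 0)) + Stmt18Aux.b2i (sb (w + Stmt18Aux.mk m n 0 1))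
        + Stmt18Aux.b2i (sb (w + Stmt18Aux.mk m n 0 2)) + Stmt18Aux.b2i (sb (w + Stmt18Aux.mk m n 1 0))
        + Stmt18Aux.b2i (sb (w + Stmt18Aux.mk m n 1 2)) + Stmt18Aux.b2i (sb (w + Stmt18Aux.mk m n 2 0))
        + Stmt18Aux.b2i (sb (w + Stmt18Aux.mk m n 2 1)) + Stmt18Aux.b2i (sb (w + Stmt18Aux.mk m n 2 2)) ≤ 3 := by
      intro hbtrue
      refine hdeg w ?_
      rw [hsb] at hbtrue
      exact of_decide_eq_true hbtrue
    have hk := Stmt18Aux.key (sb (w + Stmt18Aux.mk m n 0 0)) (sb (w + Stmt18Aux.mk m n 0 1)) (sb (w + Stmt18Aux.mk m n 0 2)) (sb (w + Stmt18Aux.mk m n 1 0)) (sb (w + Stmt18Aux.mk m n 1 1)) (sb (w + Stmt18Aux.mk m n 1 2)) (sb (w + Stmt18Aux.mk m n 2 0)) (sb (w + Stmt18Aux.mk m n 2 1)) (sb (w + Stmt18Aux.mk m n 2 2)) hcon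
    rw [eH w, eV w, hgH, hgV]
    simp only []
    linarith [hk]
  have tele : ∀ (t : ∀ i : Fin 2, ZMod (![m, n] i))
      (g : (∀ i : Fin 2, ZMod (![m, n] i)) → ℤ),
      (∑ w : ∀ i : Fin 2, ZMod (![m, n] i), g (w + t)) = ∑ w, g w := by
    intro t g
    exact Fintype.sum_equiv (Equiv.addRight t) _ _ (fun w => rfl)
  have hScard : (∑ w : ∀ i : Fin 2, ZMod (![m, n] i), Stmt18Aux.b2i (sb w)) = (S.ncard : ℤ) := by
    rw [Finset.sum_congr rfl (fun u _ => hb2 u), Finset.sum_boole,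
      Set.filter_mem_univ_eq_toFinset, Set.ncard_eq_toFinset_card' S]
  have hcardV : Fintype.card (∀ i : Fin 2, ZMod (![m, n] i)) = m * n := by
    rw [Fintype.card_pi, Fin.prod_univ_two]
    have e0 : Fintype.card (ZMod (![m, n] 0)) = m := ZMod.card m
    have e1 : Fintype.card (ZMod (![m, n] 1)) = n := ZMod.card n
    rw [e0, e1]
  have main := Finset.sum_le_sum (fun w (_ : w ∈ Finset.univ) => key_w w)
  rw [Finset.sum_add_distrib, Finset.sum_add_distrib, Finset.sum_sub_distrib,
    Finset.sum_sub_distrib, tele (Stmt18Aux.mk m n 0 1) gH, tele (Stmt18Aux.mk m n 1 0) gV, sub_self, sub_self,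
    add_zero, add_zero, ← Finset.mul_sum,
    tele (Stmt18Aux.mk m n 1 1) (fun w => Stmt18Aux.b2i (sb w)), hScard,
    Finset.sum_const, Finset.card_univ, hcardV] at main
  have hfin : 4 * (S.ncard : ℤ) ≤ (m * n : ℕ) • (2 : ℤ) := main
  rw [nsmul_eq_mul] at hfin
  have : (4 : ℝ) * (S.ncard : ℝ) ≤ (m : ℝ) * (n : ℝ) * 2 := by
    exact_mod_cast hfin
  linarith
end

section
/- The sequence β_3(T^(2)[n])/n² converges to 1/2 as n → ∞; that is, the 3-dependent limiting density τ_3^(2) for two-dimensional toroidal kings graphs equals 1/2. -/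
open Filter Topology

/- ### Certificate -/

def ZHtab : List ℤ := [4, 6, 6, 6, 1, 5, 5, 5, 6, 6, 8, 5, 2, 5, 8, 5, 7, 8, 8, 8, 0, 4, 4, 4, 5, 4, 7, 3, 1, 3, 7, 0, 5, 5, 5, 5, 1, 5, 6, 6, 4, 4, 6, 3, 3, 6, 10, 0, 7, 8, 8, 8, 1, 5, 6, 6, 3, 2, 5, 0, 2, 0, 0, 0]
def ZVtab : List ℤ := [3, 1, 1, 1, 3, 1, 1, 1, 5, 0, 0, 0, 5, 1, 0, 0, 0, 0, 1, 4, 4, 3, 1, 3, 3, 0, 0, 3, 7, 3, 0, 0, 4, 2, 1, 1, 5, 4, 0, 0, 5, 1, 1, 1, 7, 3, 0, 0, 0, 0, 0, 3, 6, 5, 0, 0, 3, 0, 0, 0, 9, 0, 0, 0]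

def ZH (q : Fin 3 → Fin 2 → Bool) : ℤ :=
  ZHtab.getD ((q 0 0).toNat + 2*(q 0 1).toNat + 4*(q 1 0).toNat + 8*(q 1 1).toNat
    + 16*(q 2 0).toNat + 32*(q 2 1).toNat) 0
def ZV (q : Fin 2 → Fin 3 → Bool) : ℤ :=
  ZVtab.getD ((q 0 0).toNat + 2*(q 0 1).toNat + 4*(q 0 2).toNat + 8*(q 1 0).toNat
    + 16*(q 1 1).toNat + 32*(q 1 2).toNat) 0

def nbrA : Finset (Fin 3 × Fin 3) :=
  {(0,0),(0,1),(0,2),(1,0),(1,2),(2,0),(2,1),(2,2)}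

set_option maxRecDepth 100000 in
theorem cert : ∀ p : Fin 3 → Fin 3 → Bool,
    (p 1 1 = true → (nbrA.filter (fun q => p q.1 q.2 = true)).card ≤ 3) →
    4 * (if p 1 1 = true then (1:ℤ) else 0) ≤ 2
      + ZH (fun i j => p i j.castSucc) - ZH (fun i j => p i j.succ)
      + ZV (fun i j => p i.castSucc j) - ZV (fun i j => p i.succ j) := by decide

/- ### Torus setup -/

section Torus

variable (n : ℕ)

def off (i j : Fin 3) : ∀ _ : Fin 2, ZMod n :=
  fun k => if k.val = 0 then ((i : ℕ) : ZMod n) else ((j : ℕ) : ZMod n)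

def eH : ∀ _ : Fin 2, ZMod n := fun k => if k.val = 0 then 0 else 1
def eV : ∀ _ : Fin 2, ZMod n := fun k => if k.val = 0 then 1 else 0

lemma off_inj (hn : 3 ≤ n) {i i' j j' : Fin 3} (h : off n i j = off n i' j') :
    i = i' ∧ j = j' := by
  have h0 := congrFun h 0
  have h1 := congrFun h 1
  simp only [off] at h0 h1
  norm_num at h0 h1
  constructor
  · have := congrArg ZMod.val h0
    rw [ZMod.val_cast_of_lt (lt_of_lt_of_le i.isLt hn),
        ZMod.val_cast_of_lt (lt_of_lt_of_le i'.isLt hn)] at this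
    exact Fin.ext this
  · have := congrArg ZMod.val h1
    rw [ZMod.val_cast_of_lt (lt_of_lt_of_le j.isLt hn),
        ZMod.val_cast_of_lt (lt_of_lt_of_le j'.isLt hn)] at this
    exact Fin.ext this

lemma off_succ_col (i : Fin 3) (j : Fin 2) :
    off n i j.succ = eH n + off n i j.castSucc := by
  funext k
  simp only [off, eH, Pi.add_apply]
  by_cases hk : k.val = 0
  · simp [hk]
  · simp only [hk, if_false]
    push_cast [Fin.val_succ, Fin.coe_castSucc]
    ring

lemma off_succ_row (i : Fin 2) (j : Fin 3) :
    off n i.succ j = eV n + off n i.castSucc j := by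
  funext k
  simp only [off, eV, Pi.add_apply]
  by_cases hk : k.val = 0
  · simp only [hk, if_true]
    push_cast [Fin.val_succ, Fin.coe_castSucc]
    ring
  · simp [hk]

lemma diff_mem (hn : 3 ≤ n) (i : Fin 3) :
    ((i:ℕ) : ZMod n) - ((1:ℕ) : ZMod n) = -1 ∨ ((i:ℕ) : ZMod n) - ((1:ℕ) : ZMod n) = 0
      ∨ ((i:ℕ) : ZMod n) - ((1:ℕ) : ZMod n) = 1 := by
  fin_cases i
  · left; push_cast; ring
  · right; left; push_cast; ring
  · right; right; push_cast; ring

end Torus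

/- ### Upper bound -/

theorem upper_bound (n : ℕ) (hn : 3 ≤ n)
    (S : Set (∀ i : Fin 2, ZMod ((fun _ => n) i)))
    (hS : IsKDependent (torusGraph 2 (fun _ => n)) 3 S) :
    2 * S.ncard ≤ n ^ 2 := by
  classical
  haveI : NeZero n := ⟨by omega⟩
  set pat : (∀ _ : Fin 2, ZMod n) → Fin 3 → Fin 3 → Bool :=
    fun t i j => decide (t + off n i j ∈ S) with hpat
  have hne : ∀ q ∈ nbrA, q ≠ ((1 : Fin 3), (1 : Fin 3)) := by decide
  -- admissibility
  have adm : ∀ t : (∀ _ : Fin 2, ZMod n), pat t 1 1 = true →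
      (nbrA.filter (fun q => pat t q.1 q.2 = true)).card ≤ 3 := by
    intro t h
    have hv : t + off n 1 1 ∈ S := of_decide_eq_true h
    have hdep := hS _ hv
    set N : Set (∀ _ : Fin 2, ZMod n) :=
      S ∩ (torusGraph 2 (fun _ => n)).neighborSet (t + off n 1 1) with hN
    have hfin : N.Finite := Set.toFinite _
    have hmaps : ∀ q ∈ nbrA.filter (fun q => pat t q.1 q.2 = true),
        t + off n q.1 q.2 ∈ hfin.toFinset := by
      intro q hq
      rw [Finset.mem_filter] at hq
      rw [Set.Finite.mem_toFinset, hN]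
      refine ⟨of_decide_eq_true hq.2, ?_, ?_⟩
      · -- t + off 1 1 ≠ t + off q.1 q.2
        intro heq
        have := off_inj n hn (add_left_cancel heq)
        exact hne q hq.1 (by rw [Prod.ext_iff]; exact ⟨this.1.symm, this.2.symm⟩)
      · intro i
        have hdi : (t + off n q.1 q.2) i - (t + off n 1 1) i
            = off n q.1 q.2 i - off n 1 1 i := by
          simp only [Pi.add_apply]; ring
        rw [hdi]
        fin_cases i
        · simpa [off] using diff_mem n hn q.1
        · simpa [off] using diff_mem n hn q.2
    have hinj : Set.InjOn (fun q : Fin 3 × Fin 3 => t + off n q.1 q.2)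
        (nbrA.filter (fun q => pat t q.1 q.2 = true)) := by
      intro q hq q' hq' heq
      have := off_inj n hn (add_left_cancel heq)
      exact Prod.ext this.1 this.2
    calc (nbrA.filter (fun q => pat t q.1 q.2 = true)).card
        ≤ hfin.toFinset.card := Finset.card_le_card_of_injOn _ hmaps hinj
      _ = N.ncard := (Set.ncard_eq_toFinset_card _ hfin).symm
      _ ≤ 3 := hdep
  -- pointwise certificate
  set FH : (∀ _ : Fin 2, ZMod n) → ℤ :=
    fun x => ZH (fun i j => pat x i j.castSucc) with hFH
  set FV : (∀ _ : Fin 2, ZMod n) → ℤ :=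
    fun x => ZV (fun i j => pat x i.castSucc j) with hFV
  have key : ∀ t : (∀ _ : Fin 2, ZMod n),
      4 * (if pat t 1 1 = true then (1:ℤ) else 0) ≤ 2
        + FH t - FH (t + eH n) + FV t - FV (t + eV n) := by
    intro t
    have h := cert (pat t) (adm t)
    have e1 : (fun i j => pat t i (Fin.succ j)) = (fun i j => pat (t + eH n) i j.castSucc) := by
      funext i j
      have hv : t + off n i (Fin.succ j) = (t + eH n) + off n i j.castSucc := by
        rw [off_succ_col n i j, ← add_assoc]
      simp only [hpat]
      rw [hv]
    have e2 : (fun i j => pat t (Fin.succ i) j) = (fun i j => pat (t + eV n) i.castSucc j) := by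
      funext i j
      have hv : t + off n (Fin.succ i) j = (t + eV n) + off n i.castSucc j := by
        rw [off_succ_row n i j, ← add_assoc]
      simp only [hpat]
      rw [hv]
    rw [e1, e2] at h
    exact h
  -- summation
  have shift : ∀ (f : (∀ _ : Fin 2, ZMod n) → ℤ) (c : ∀ _ : Fin 2, ZMod n),
      ∑ t : (∀ _ : Fin 2, ZMod n), f (t + c) = ∑ t : (∀ _ : Fin 2, ZMod n), f t :=
    fun f c => Fintype.sum_equiv (Equiv.addRight c) _ _ (fun t => rfl)
  have hsum := Finset.sum_le_sum (fun t (_ : t ∈ Finset.univ) => key t)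
  have hcardV : Fintype.card (∀ _ : Fin 2, ZMod n) = n ^ 2 := by
    rw [Fintype.card_pi]
    simp [ZMod.card]
  have hL : (∑ t : (∀ _ : Fin 2, ZMod n), 4 * (if pat t 1 1 = true then (1:ℤ) else 0))
      = 4 * (S.ncard : ℤ) := by
    rw [← Finset.mul_sum]
    congr 1
    have h1 : ∀ t : (∀ _ : Fin 2, ZMod n), (if pat t 1 1 = true then (1:ℤ) else 0)
        = (fun x : (∀ _ : Fin 2, ZMod n) => if x ∈ S then (1:ℤ) else 0) (t + off n 1 1) := by
      intro t
      simp [hpat]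
    rw [Finset.sum_congr rfl (fun t _ => h1 t),
      shift (fun x : (∀ _ : Fin 2, ZMod n) => if x ∈ S then (1:ℤ) else 0) (off n 1 1)]
    rw [Finset.sum_boole]
    have h2 : S.ncard = (Finset.univ.filter (fun x : (∀ _ : Fin 2, ZMod n) => x ∈ S)).card := by
      rw [Set.ncard_eq_toFinset_card' S]
      congr 1
      ext x
      simp
    rw [h2]
  have hR : (∑ t : (∀ _ : Fin 2, ZMod n),
      (2 + FH t - FH (t + eH n) + FV t - FV (t + eV n)))
      = 2 * ((n:ℤ) ^ 2) := by
    simp only [Finset.sum_add_distrib, Finset.sum_sub_distrib]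
    rw [shift FH (eH n), shift FV (eV n)]
    rw [Finset.sum_const, Finset.card_univ, hcardV]
    push_cast
    ring
  rw [hL, hR] at hsum
  have : (2 * S.ncard : ℤ) ≤ (n:ℤ) ^ 2 := by
    push_cast
    linarith
  exact_mod_cast this

/- ### Lower bound -/

theorem lower_bound (n : ℕ) (hn : 3 ≤ n) :
    ∃ S : Set (∀ i : Fin 2, ZMod ((fun _ => n) i)),
      IsKDependent (torusGraph 2 (fun _ => n)) 3 S ∧ S.ncard = (n-1)/2 * n := by
  haveI : NeZero n := ⟨by omega⟩
  set ψ : Fin ((n-1)/2) × Fin n → (∀ _ : Fin 2, ZMod n) :=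
    fun a k => if k.val = 0 then ((2 * a.1.val : ℕ) : ZMod n) else ((a.2.val : ℕ) : ZMod n)
    with hψ
  have hrow : ∀ a : Fin ((n-1)/2), 2 * a.val ≤ n - 3 := by
    intro a; have := a.isLt; omega
  have hψ0 : ∀ a, ψ a 0 = ((2 * a.1.val : ℕ) : ZMod n) := by intro a; simp [hψ]
  have hψ1 : ∀ a, ψ a 1 = ((a.2.val : ℕ) : ZMod n) := by intro a; simp [hψ]
  have hinj : Function.Injective ψ := by
    intro a b h
    have h0 : ((2 * a.1.val : ℕ) : ZMod n) = ((2 * b.1.val : ℕ) : ZMod n) := by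
      rw [← hψ0 a, ← hψ0 b, h]
    have h1 : ((a.2.val : ℕ) : ZMod n) = ((b.2.val : ℕ) : ZMod n) := by
      rw [← hψ1 a, ← hψ1 b, h]
    have e0 := congrArg ZMod.val h0
    rw [ZMod.val_cast_of_lt (by have := hrow a.1; omega),
        ZMod.val_cast_of_lt (by have := hrow b.1; omega)] at e0
    have e1 := congrArg ZMod.val h1
    rw [ZMod.val_cast_of_lt a.2.isLt, ZMod.val_cast_of_lt b.2.isLt] at e1
    exact Prod.ext (Fin.ext (by omega)) (Fin.ext e1)
  refine ⟨Set.range ψ, ?_, ?_⟩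
  · rintro v ⟨a, rfl⟩
    set vL : (∀ _ : Fin 2, ZMod n) :=
      fun k => if k.val = 0 then ψ a 0 else ψ a 1 - 1 with hvL
    set vR : (∀ _ : Fin 2, ZMod n) :=
      fun k => if k.val = 0 then ψ a 0 else ψ a 1 + 1 with hvR
    have hsub : Set.range ψ ∩ (torusGraph 2 (fun _ => n)).neighborSet (ψ a)
        ⊆ {vL, vR} := by
      rintro u ⟨⟨b, rfl⟩, hadj⟩
      obtain ⟨hne, hdiff⟩ := hadj
      have hd0 := hdiff 0
      rw [hψ0 a, hψ0 b] at hd0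
      have hrowseq : b.1 = a.1 := by
        rcases hd0 with h | h | h
        · exfalso
          have hc : ((2 * b.1.val + 1 : ℕ) : ZMod n) = ((2 * a.1.val : ℕ) : ZMod n) := by
            push_cast
            push_cast at h
            linear_combination h
          have := congrArg ZMod.val hc
          rw [ZMod.val_cast_of_lt (by have := hrow b.1; omega),
              ZMod.val_cast_of_lt (by have := hrow a.1; omega)] at this
          omega
        · have hc : ((2 * b.1.val : ℕ) : ZMod n) = ((2 * a.1.val : ℕ) : ZMod n) := by
            linear_combination h
          have := congrArg ZMod.val hc
          rw [ZMod.val_cast_of_lt (by have := hrow b.1; omega),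
              ZMod.val_cast_of_lt (by have := hrow a.1; omega)] at this
          exact Fin.ext (by omega)
        · exfalso
          have hc : ((2 * b.1.val : ℕ) : ZMod n) = ((2 * a.1.val + 1 : ℕ) : ZMod n) := by
            push_cast
            push_cast at h
            linear_combination h
          have := congrArg ZMod.val hc
          rw [ZMod.val_cast_of_lt (by have := hrow b.1; omega),
              ZMod.val_cast_of_lt (by have := hrow a.1; omega)] at this
          omega
      have hb0 : ψ b 0 = ψ a 0 := by rw [hψ0 a, hψ0 b, hrowseq]
      have hd1 := hdiff 1
      rcases hd1 with h | h | h
      · left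
        funext k
        fin_cases k
        · simpa [hvL] using hb0
        · simp only [hvL]
          norm_num
          linear_combination h
      · exfalso
        apply hne
        funext k
        fin_cases k
        · exact hb0.symm
        · have : ψ b 1 = ψ a 1 := by linear_combination h
          exact this.symm
      · right
        funext k
        fin_cases k
        · simpa [hvR] using hb0
        · simp only [hvR]
          norm_num
          linear_combination h
    calc (Set.range ψ ∩ (torusGraph 2 (fun _ => n)).neighborSet (ψ a)).ncard
        ≤ ({vL, vR} : Set (∀ _ : Fin 2, ZMod n)).ncard :=
          Set.ncard_le_ncard hsub (Set.toFinite _)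
      _ ≤ 2 := by
          refine le_trans (Set.ncard_insert_le _ _) ?_
          rw [Set.ncard_singleton]
      _ ≤ 3 := by omega
  · have h1 : (Set.range ψ).ncard = Nat.card (Fin ((n-1)/2) × Fin n) := by
      rw [← Nat.card_coe_set_eq, Nat.card_range_of_injective hinj]
    rw [h1, Nat.card_eq_fintype_card, Fintype.card_prod, Fintype.card_fin, Fintype.card_fin]

theorem betaK_le (n : ℕ) (hn : 3 ≤ n) :
    betaK (torusGraph 2 (fun _ => n)) 3 ≤ n ^ 2 / 2 := by
  apply csSup_le
  · exact ⟨0, ∅, fun v hv => absurd hv (Set.notMem_empty v), Set.ncard_empty _⟩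
  · rintro m ⟨S, hdep, rfl⟩
    rw [Nat.le_div_iff_mul_le (by norm_num)]
    have := upper_bound n hn S hdep
    omega

theorem betaK_ge (n : ℕ) (hn : 3 ≤ n) :
    (n - 1) / 2 * n ≤ betaK (torusGraph 2 (fun _ => n)) 3 := by
  haveI : NeZero n := ⟨by omega⟩
  obtain ⟨S, hdep, hcard⟩ := lower_bound n hn
  apply le_csSup
  · refine ⟨n ^ 2, ?_⟩
    rintro m ⟨T, _, rfl⟩
    calc T.ncard ≤ (Set.univ : Set (∀ i : Fin 2, ZMod ((fun _ => n) i))).ncard :=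
          Set.ncard_le_ncard (Set.subset_univ T) Set.finite_univ
      _ = n ^ 2 := by
          rw [Set.ncard_univ, Nat.card_eq_fintype_card, Fintype.card_pi]
          simp [ZMod.card]
  · exact ⟨S, hdep, hcard⟩


/-- τ_3^(2) = 1/2. -/
theorem stmt_19 :
    Filter.Tendsto
      (fun n : ℕ => (betaK (torusGraph 2 (fun _ => n)) 3 : ℝ) / (n : ℝ) ^ 2)
      Filter.atTop (nhds (1/2 : ℝ)) := by
  have h1 : Filter.Tendsto (fun n : ℕ => 1/2 - 1/(n:ℝ)) Filter.atTop (nhds (1/2 : ℝ)) := by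
    simpa using tendsto_const_nhds.sub (tendsto_one_div_atTop_nhds_zero_nat : Filter.Tendsto (fun n : ℕ => 1/(n:ℝ)) Filter.atTop (nhds 0))
  refine tendsto_of_tendsto_of_tendsto_of_le_of_le' h1 tendsto_const_nhds ?_ ?_
  · filter_upwards [Filter.eventually_ge_atTop 3] with n hn
    have hnR : (0:ℝ) < (n:ℝ) := by positivity
    have hge := betaK_ge n hn
    have hgeR : ((n - 1) / 2 * n : ℕ) ≤ (betaK (torusGraph 2 (fun _ => n)) 3 : ℝ) := by
      exact_mod_cast Nat.cast_le.mpr hge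
    have hhalf : ((n:ℝ) - 2) / 2 ≤ (((n - 1) / 2 : ℕ) : ℝ) := by
      have h2 : n - 2 ≤ 2 * ((n - 1) / 2) := by omega
      have h2R : ((n - 2 : ℕ) : ℝ) ≤ 2 * (((n - 1) / 2 : ℕ) : ℝ) := by exact_mod_cast h2
      rw [Nat.cast_sub (by omega)] at h2R
      push_cast at h2R
      linarith
    have hstep : ((n:ℝ) - 2) / 2 * (n:ℝ) ≤ (betaK (torusGraph 2 (fun _ => n)) 3 : ℝ) := by
      calc ((n:ℝ) - 2) / 2 * (n:ℝ) ≤ (((n - 1) / 2 : ℕ) : ℝ) * (n:ℝ) := by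
            apply mul_le_mul_of_nonneg_right hhalf (le_of_lt hnR)
        _ = (((n - 1) / 2 * n : ℕ) : ℝ) := by push_cast; ring
        _ ≤ _ := hgeR
    have hident : 1/2 - 1/(n:ℝ) = (((n:ℝ) - 2) / 2 * (n:ℝ)) / (n:ℝ)^2 := by
      field_simp
    rw [hident]
    have hpos : (0:ℝ) < (n:ℝ)^2 := by positivity
    gcongr
  · filter_upwards [Filter.eventually_ge_atTop 3] with n hn
    have hnR : (0:ℝ) < (n:ℝ) := by positivity
    have hle := betaK_le n hn
    have hleR : (betaK (torusGraph 2 (fun _ => n)) 3 : ℝ) ≤ ((n ^ 2 / 2 : ℕ) : ℝ) := by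
      exact_mod_cast hle
    have h2 : ((n ^ 2 / 2 : ℕ) : ℝ) ≤ (n:ℝ)^2 / 2 := by
      calc ((n ^ 2 / 2 : ℕ) : ℝ) ≤ ((n ^ 2 : ℕ) : ℝ) / (2:ℕ) := Nat.cast_div_le
        _ = (n:ℝ)^2 / 2 := by push_cast; ring
    rw [div_le_iff₀ (by positivity)]
    calc (betaK (torusGraph 2 (fun _ => n)) 3 : ℝ) ≤ (n:ℝ)^2/2 := le_trans hleR h2
      _ = 1/2 * (n:ℝ)^2 := by ring
end
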